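/- arXiv:1412.7183 — 5 statements merged into one kernel-verified Lean document; each statement's English description precedes it below -/
import Mathlib

section
/- Let n ≥ 1. Every Lie subalgebra S of the Lie algebra of real 2n×2n matrices (with bracket [X,Y] = XY − YX) satisfying sp(2n,ℝ) ⊆ S ⊆ sl(2n,ℝ) is equal to sp(2n,ℝ) or to sl(2n,ℝ); in other words, there is no intermediate Lie subalgebra sp(2n,ℝ) ⊊ S ⊊ sl(2n,ℝ). -/
open Matrix

attribute [local instance 100] LieRing.ofAssociativeRing

/-- The standard symplectic matrix `J₀ = [[0, I], [−I, 0]]` (in `n × n` block form)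
as a real `2n × 2n` matrix. -/
def stdJ (n : ℕ) : Matrix (Fin n ⊕ Fin n) (Fin n ⊕ Fin n) ℝ :=
  Matrix.fromBlocks 0 1 (-1) 0

namespace SpSlAux

variable {n : ℕ}

abbrev ι (n : ℕ) := Fin n ⊕ Fin n

/-- the sign function: -1 on `inl`, +1 on `inr`. -/
def ε : ι n → ℝ := Sum.elim (fun _ => (-1 : ℝ)) (fun _ => (1 : ℝ))

@[simp] lemma ε_swap (x : ι n) : ε x.swap = -ε x := by cases x <;> simp [ε]

@[simp] lemma ε_mul_self (x : ι n) : ε x * ε x = 1 := by cases x <;> simp [ε]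

lemma ε_ne_zero (x : ι n) : ε x ≠ 0 := by cases x <;> simp [ε]

@[simp] lemma swap_swap (x : ι n) : x.swap.swap = x := Sum.swap_swap x

@[simp] lemma swap_inj {x y : ι n} : x.swap = y.swap ↔ x = y :=
  ⟨fun h => by rw [← swap_swap x, h, swap_swap], fun h => by rw [h]⟩

@[simp] lemma ε_sq (x : ι n) : ε x ^ 2 = 1 := by cases x <;> simp [ε]

lemma swap_ne_self (x : ι n) : x.swap ≠ x := by cases x <;> simp [Sum.swap]

lemma swap_eq_iff {x y : ι n} : x.swap = y ↔ x = y.swap := by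
  constructor <;> rintro rfl <;> simp

/-- entries of `stdJ`. -/
lemma stdJ_apply (x y : ι n) :
    stdJ n x y = if y = x.swap then ε y else 0 := by
  rcases x with i | i <;> rcases y with j | j <;>
    simp [stdJ, Matrix.fromBlocks, ε, Sum.swap, Matrix.one_apply, eq_comm] <;>
    split_ifs <;> simp

lemma stdJ_mul_apply (A : Matrix (ι n) (ι n) ℝ) (x y : ι n) :
    (stdJ n * A) x y = -(ε x) * A x.swap y := by
  rw [Matrix.mul_apply]
  rw [Finset.sum_eq_single x.swap]
  · rw [stdJ_apply]; simp
  · intro b _ hb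
    rw [stdJ_apply]; simp [hb]
  · simp

lemma mul_stdJ_apply (A : Matrix (ι n) (ι n) ℝ) (x y : ι n) :
    (A * stdJ n) x y = ε y * A x y.swap := by
  rw [Matrix.mul_apply]
  rw [Finset.sum_eq_single y.swap]
  · rw [stdJ_apply]; simp [mul_comm]
  · intro b _ hb
    rw [stdJ_apply]
    have : ¬ y = b.swap := by
      intro h; apply hb; rw [h, swap_swap]
    simp [this]
  · simp

/-- The (entrywise) symplectic condition. -/
def InSp (A : Matrix (ι n) (ι n) ℝ) : Prop :=
  ∀ x y, A x y = -(ε x * ε y) * A y.swap x.swap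

/-- The (entrywise) anti-fixed condition (the `m` part). -/
def InM (A : Matrix (ι n) (ι n) ℝ) : Prop :=
  ∀ x y, A x y = (ε x * ε y) * A y.swap x.swap

lemma mem_sp_iff (A : Matrix (ι n) (ι n) ℝ) :
    Aᵀ * stdJ n + stdJ n * A = 0 ↔ InSp A := by
  constructor
  · intro h x y
    have := Matrix.ext_iff.mpr h x.swap y
    simp only [Matrix.add_apply, mul_stdJ_apply, stdJ_mul_apply, Matrix.transpose_apply,
      Matrix.zero_apply, swap_swap, ε_swap] at this
    have key : ε y * A y.swap x.swap = -(ε x) * A x y := by linarith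
    have h2 : -(ε x * ε y) * A y.swap x.swap = -(ε x) * (ε y * A y.swap x.swap) := by ring
    rw [h2, key]; ring_nf; simp [ε_sq]
  · intro h
    ext x y
    simp only [Matrix.add_apply, mul_stdJ_apply, stdJ_mul_apply, Matrix.transpose_apply,
      Matrix.zero_apply]
    have h1 := h x.swap y
    rw [swap_swap] at h1
    rw [h1]
    simp only [ε_swap]
    ring_nf
    simp [ε_sq]


/-- matrix unit -/
def E (x y : ι n) : Matrix (ι n) (ι n) ℝ := Matrix.single x y 1

lemma E_apply (x y a b : ι n) : E x y a b = if x = a ∧ y = b then 1 else 0 := by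
  simp [E, Matrix.single]

lemma E_mul_same (a b c : ι n) : E a b * E b c = E a c := by
  unfold E
  rw [Matrix.single_mul_single_same, mul_one]

lemma E_mul_ne {b c : ι n} (h : b ≠ c) (a d : ι n) : E a b * E c d = 0 :=
  Matrix.single_mul_single_of_ne (c := (1:ℝ)) a b c h 1

lemma E_swap_apply (x y a b : ι n) :
    E y.swap x.swap a b = if x = b.swap ∧ y = a.swap then 1 else 0 := by
  rw [E_apply]
  congr 1
  simp only [eq_iff_iff]
  constructor
  · rintro ⟨h1, h2⟩
    exact ⟨by rw [← h2, swap_swap], by rw [← h1, swap_swap]⟩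
  · rintro ⟨h1, h2⟩
    exact ⟨by rw [h2, swap_swap], by rw [h1, swap_swap]⟩

lemma mul_self_eq_one (x y : ι n) : (ε x * ε y) * (ε x * ε y) = 1 := by
  rw [mul_mul_mul_comm, ε_mul_self, ε_mul_self, one_mul]

/-- the `m`-part basis elements -/
def G (x y : ι n) : Matrix (ι n) (ι n) ℝ := E x y + (ε x * ε y) • E y.swap x.swap

/-- symplectic basis elements -/
def F (x y : ι n) : Matrix (ι n) (ι n) ℝ := E x y - (ε x * ε y) • E y.swap x.swap

/-- the doubled diagonal elements -/
def Dm (x : ι n) : Matrix (ι n) (ι n) ℝ := E x x + E x.swap x.swap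

lemma G_self (x : ι n) : G x x = Dm x := by
  simp [G, Dm, ε_mul_self]

lemma G_swap_self (x : ι n) : G x x.swap = 0 := by
  have h : ε x * ε x.swap = -1 := by rw [ε_swap, mul_neg, ε_mul_self]
  simp [G, h, swap_swap]

lemma G_swap (x y : ι n) : G y.swap x.swap = (ε x * ε y) • G x y := by
  have h1 : ε y.swap * ε x.swap = ε x * ε y := by rw [ε_swap, ε_swap, neg_mul_neg, mul_comm]
  simp only [G, smul_add, smul_smul, mul_self_eq_one, one_smul, h1, swap_swap]
  rw [add_comm]

lemma G_apply (x y a b : ι n) :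
    G x y a b = (if x = a ∧ y = b then 1 else 0)
      + (ε x * ε y) * (if x = b.swap ∧ y = a.swap then 1 else 0) := by
  rw [G]
  simp only [Matrix.add_apply, Matrix.smul_apply, smul_eq_mul]
  rw [E_apply, E_swap_apply]

lemma F_apply (x y a b : ι n) :
    F x y a b = (if x = a ∧ y = b then 1 else 0)
      - (ε x * ε y) * (if x = b.swap ∧ y = a.swap then 1 else 0) := by
  rw [F]
  simp only [Matrix.sub_apply, Matrix.smul_apply, smul_eq_mul]
  rw [E_apply, E_swap_apply]

lemma inSp_F (x y : ι n) : InSp (F x y) := by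
  intro a b
  rw [F_apply, F_apply]
  have e1 : (x = (a.swap).swap ∧ y = (b.swap).swap) ↔ (x = a ∧ y = b) := by
    rw [swap_swap, swap_swap]
  rw [if_congr e1 rfl rfl]
  by_cases h1 : x = a ∧ y = b <;> by_cases h2 : x = b.swap ∧ y = a.swap
  · obtain ⟨rfl, rfl⟩ := h1
    obtain ⟨h3, -⟩ := h2
    subst h3
    simp [ε_swap]
    try ring_nf
    try simp [ε_sq]
    try ring
  · obtain ⟨rfl, rfl⟩ := h1
    simp [h2]
    try ring_nf
    try simp [ε_sq]
    try ring
  · obtain ⟨rfl, rfl⟩ := h2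
    simp [h1, ε_swap]
    try ring_nf
    try simp [ε_sq]
    try ring
  · simp [h1, h2]

lemma inSp_E_swap (x : ι n) : InSp (E x x.swap) := by
  intro a b
  rw [E_apply, E_apply]
  by_cases h1 : x = a ∧ x.swap = b
  · obtain ⟨rfl, rfl⟩ := h1
    have e2 : (x = (x.swap).swap ∧ x.swap = x.swap) ↔ True := by simp
    rw [if_congr e2 rfl rfl, if_pos trivial, if_pos ⟨rfl, rfl⟩]
    rw [ε_swap]
    ring_nf
    simp [ε_sq]
  · rw [if_neg h1]
    have h2 : ¬ (x = b.swap ∧ x.swap = a.swap) := by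
      rintro ⟨h2a, h2b⟩
      exact h1 ⟨swap_inj.mp h2b, by rw [h2a, swap_swap]⟩
    rw [if_neg h2]
    ring

lemma inSp_diagonal (d : ι n → ℝ) (hd : ∀ x, d x.swap = -d x) :
    InSp (Matrix.diagonal d) := by
  intro a b
  by_cases h : a = b
  · subst h
    simp [Matrix.diagonal_apply, hd]
  · have h' : b.swap ≠ a.swap := fun hc => h (by simpa using hc.symm)
    simp [Matrix.diagonal_apply, h, h']


lemma ne_swap_left {x y : ι n} (h : x ≠ y.swap) : x.swap ≠ y :=
  fun hc => h (by rw [← hc, swap_swap])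

lemma swap_ne_swap {x y : ι n} (h : x ≠ y) : x.swap ≠ y.swap :=
  fun hc => h (swap_inj.mp hc)

lemma ne_swap_symm {x y : ι n} (h : x ≠ y.swap) : y ≠ x.swap :=
  fun hc => h (by rw [hc, swap_swap])

lemma lie_def' (A B : Matrix (ι n) (ι n) ℝ) : ⁅A, B⁆ = A * B - B * A := Ring.lie_def A B

/-- Move 1 : change the first index to a fresh one. -/
lemma move1 {p q x : ι n} (hqp : q ≠ p.swap) (hxp : x ≠ p) (hxsp : x ≠ p.swap)
    (hxq : x ≠ q) (hxsq : x ≠ q.swap) :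
    ⁅F x p, G p q⁆ = G x q := by
  have n1 : p ≠ q.swap := ne_swap_symm hqp
  have n2 : x.swap ≠ p := ne_swap_left hxsp
  have n3 : x.swap ≠ q.swap := swap_ne_swap hxq
  have n4 : q ≠ x := hxq.symm
  have n5 : q ≠ p.swap := hqp
  have n6 : p.swap ≠ x := ne_swap_left (ne_swap_symm hxsp)
  rw [lie_def', F, G]
  simp only [sub_mul, mul_sub, add_mul, mul_add, smul_mul_assoc, mul_smul_comm, smul_smul,
    E_mul_same, E_mul_ne n1, E_mul_ne n2, E_mul_ne n3, E_mul_ne n4, E_mul_ne n5, E_mul_ne n6,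
    smul_zero, mul_zero, zero_mul, sub_zero, zero_sub, add_zero, zero_add, neg_zero, smul_neg]
  rw [G]
  match_scalars <;> rcases p with i|i <;> rcases q with j|j <;> rcases x with k|k <;>
    norm_num [ε]

/-- Move 2 : change the second index to a fresh one. -/
lemma move2 {p q y : ι n} (hqp : q ≠ p.swap) (hyp : y ≠ p) (hysq : y ≠ q.swap) :
    ⁅F q y, G p q⁆ = -(G p y) := by
  have n1 : y ≠ p := hyp
  have n2 : y ≠ q.swap := hysq
  have n3 : q.swap ≠ p := ne_swap_left hqp
  have n4 : q ≠ y.swap := ne_swap_symm hysq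
  have n5 : p.swap ≠ q := hqp.symm
  have n6 : p.swap ≠ y.swap := swap_ne_swap hyp.symm
  rw [lie_def', F, G]
  simp only [sub_mul, mul_sub, add_mul, mul_add, smul_mul_assoc, mul_smul_comm, smul_smul,
    E_mul_same, E_mul_ne n1, E_mul_ne n2, E_mul_ne n3, E_mul_ne n4, E_mul_ne n5, E_mul_ne n6,
    smul_zero, mul_zero, zero_mul, sub_zero, zero_sub, add_zero, zero_add, neg_zero, smul_neg]
  rw [G]
  match_scalars <;> rcases p with i|i <;> rcases q with j|j <;> rcases y with k|k <;>
    norm_num [ε]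

/-- Move 4 : swap the second index. -/
lemma move4 {x q : ι n} (hxq : x ≠ q) (hqsx : q ≠ x.swap) :
    ⁅E q q.swap, G x q⁆ = -(G x q.swap) := by
  have n1 : q.swap ≠ x := fun hc => hqsx (by rw [← hc, swap_swap])
  have n2 : x.swap ≠ q := ne_swap_left (ne_swap_symm hqsx)
  rw [lie_def', G]
  simp only [mul_sub, sub_mul, add_mul, mul_add, smul_mul_assoc, mul_smul_comm, smul_smul,
    E_mul_same, E_mul_ne n1, E_mul_ne n2,
    smul_zero, mul_zero, zero_mul, sub_zero, zero_sub, add_zero, zero_add, neg_zero, smul_neg]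
  rw [G]
  simp only [swap_swap]
  match_scalars <;> rcases x with i|i <;> rcases q with j|j <;> norm_num [ε]

/-- Move 5 : swap the first index. -/
lemma move5 {x q : ι n} (hxq : x ≠ q) (hqsx : q ≠ x.swap) :
    ⁅E x.swap x, G x q⁆ = G x.swap q := by
  have n1 : x ≠ q.swap := ne_swap_symm hqsx
  have n2 : q ≠ x.swap := hqsx
  rw [lie_def', G]
  simp only [mul_sub, sub_mul, add_mul, mul_add, smul_mul_assoc, mul_smul_comm, smul_smul,
    E_mul_same, E_mul_ne n1, E_mul_ne n2,
    smul_zero, mul_zero, zero_mul, sub_zero, zero_sub, add_zero, zero_add, neg_zero, smul_neg]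
  rw [G]
  simp only [swap_swap]
  match_scalars <;> rcases x with i|i <;> rcases q with j|j <;> norm_num [ε]

/-- Move D : produce diagonal differences. -/
lemma moveD {p q : ι n} (hqp : q ≠ p.swap) :
    ⁅F q p, G p q⁆ = Dm q - Dm p := by
  have n1 : p ≠ q.swap := ne_swap_symm hqp
  have n2 : q.swap ≠ p := ne_swap_left hqp
  have n3 : q ≠ p.swap := hqp
  have n4 : p.swap ≠ q := hqp.symm
  rw [lie_def', F, G]
  simp only [sub_mul, mul_sub, add_mul, mul_add, smul_mul_assoc, mul_smul_comm, smul_smul,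
    E_mul_same, E_mul_ne n1, E_mul_ne n2, E_mul_ne n3, E_mul_ne n4,
    smul_zero, mul_zero, zero_mul, sub_zero, zero_sub, add_zero, zero_add, neg_zero, smul_neg]
  rw [Dm, Dm]
  match_scalars <;> rcases p with i|i <;> rcases q with j|j <;> norm_num [ε]

lemma E_mul_diagonal (d : ι n → ℝ) (x y : ι n) :
    E x y * Matrix.diagonal d = d y • E x y := by
  ext a b
  rw [Matrix.mul_diagonal]
  simp only [Matrix.smul_apply, E_apply, smul_eq_mul]
  by_cases h : x = a ∧ y = b
  · obtain ⟨rfl, rfl⟩ := h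
    simp
  · simp only [if_neg h]
    ring

lemma diagonal_mul_E (d : ι n → ℝ) (x y : ι n) :
    Matrix.diagonal d * E x y = d x • E x y := by
  ext a b
  rw [Matrix.diagonal_mul]
  simp only [Matrix.smul_apply, E_apply, smul_eq_mul]
  by_cases h : x = a ∧ y = b
  · obtain ⟨rfl, rfl⟩ := h
    simp
  · simp only [if_neg h]
    ring

/-- Move Diag : get a `G` element from a nonconstant diagonal element. -/
lemma moveDiag (v : Matrix (ι n) (ι n) ℝ) (d : ι n → ℝ) (hv : v = Matrix.diagonal d)
    (hsw : ∀ a, d a.swap = d a) (p q : ι n) :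
    ⁅F p q, v⁆ = (d q - d p) • G p q := by
  subst hv
  rw [lie_def', F, G]
  simp only [sub_mul, mul_sub, smul_mul_assoc, mul_smul_comm, smul_smul,
    E_mul_diagonal, diagonal_mul_E]
  rw [hsw p, hsw q]
  match_scalars <;> rcases p with i|i <;> rcases q with j|j <;> norm_num [ε] <;> ring

@[simp] lemma swap_ne_self' (x : ι n) : ¬ x.swap = x := swap_ne_self x

@[simp] lemma self_ne_swap (x : ι n) : ¬ x = x.swap := fun h => swap_ne_self x h.symm

lemma lie_diag_apply (d : ι n → ℝ) (w : Matrix (ι n) (ι n) ℝ) (x y : ι n) :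
    ⁅Matrix.diagonal d, w⁆ x y = (d x - d y) * w x y := by
  rw [lie_def', Matrix.sub_apply, Matrix.diagonal_mul, Matrix.mul_diagonal]
  ring

/-- the weight-selecting diagonal. -/
def χ (p : ι n) (x : ι n) : ℝ := if x = p then 1 else if x = p.swap then -1 else 0

lemma χ_swap (p x : ι n) : χ p x.swap = - χ p x := by
  unfold χ
  by_cases h1 : x = p <;> by_cases h2 : x = p.swap
  · rw [h1] at h2; exact absurd h2.symm (swap_ne_self p)
  · subst h1; simp
  · subst h2; simp [swap_swap]
  · simp [swap_eq_iff, h1, h2]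

lemma χ_range (p x : ι n) : χ p x = 1 ∨ χ p x = 0 ∨ χ p x = -1 := by
  unfold χ; split_ifs <;> simp

lemma χ_self (p : ι n) : χ p p = 1 := by simp [χ]

lemma χ_swap_self (p : ι n) : χ p p.swap = -1 := by simp [χ]

lemma χ_other {p x : ι n} (h1 : x ≠ p) (h2 : x ≠ p.swap) : χ p x = 0 := by
  simp [χ, h1, h2]

lemma chi_diff_one {p x y : ι n} (h : χ p x - χ p y = 1) :
    (x = p ∧ y ≠ p ∧ y ≠ p.swap) ∨ (y = p.swap ∧ x ≠ p ∧ x ≠ p.swap) := by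
  unfold χ at h
  by_cases h1 : x = p <;> by_cases h2 : x = p.swap <;>
    by_cases h3 : y = p <;> by_cases h4 : y = p.swap <;>
    simp_all <;> norm_num at h

lemma chi_diff_neg_one {p x y : ι n} (h : χ p x - χ p y = -1) :
    (y = p ∧ x ≠ p ∧ x ≠ p.swap) ∨ (x = p.swap ∧ y ≠ p ∧ y ≠ p.swap) := by
  have h' : χ p y - χ p x = 1 := by linarith
  exact chi_diff_one h'

lemma InM.swap_self_zero {v : Matrix (ι n) (ι n) ℝ} (hm : InM v) (p : ι n) :
    v p p.swap = 0 := by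
  have := hm p p.swap
  rw [swap_swap] at this
  have he : ε p * ε p.swap = -1 := by rw [ε_swap, mul_neg, ε_mul_self]
  rw [he] at this
  linarith


lemma Dm_swap (x : ι n) : Dm x.swap = Dm x := by
  rw [Dm, Dm, swap_swap, add_comm]

/-- the swap equivalence. -/
def σswap : ι n ≃ ι n := ⟨Sum.swap, Sum.swap, fun x => swap_swap x, fun x => swap_swap x⟩

@[simp] lemma σswap_apply (x : ι n) : σswap x = x.swap := rfl


lemma theta_apply (A : Matrix (ι n) (ι n) ℝ) (x y : ι n) :
    (stdJ n * Aᵀ * stdJ n) x y = -(ε x * ε y) * A y.swap x.swap := by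
  rw [mul_stdJ_apply, stdJ_mul_apply, Matrix.transpose_apply]
  ring

lemma trace_theta (A : Matrix (ι n) (ι n) ℝ) :
    (stdJ n * Aᵀ * stdJ n).trace = - A.trace := by
  rw [Matrix.trace, Matrix.trace]
  have h1 : ∀ x : ι n, (stdJ n * Aᵀ * stdJ n).diag x = -(A x.swap x.swap) := by
    intro x
    rw [Matrix.diag_apply, theta_apply, ε_mul_self, neg_one_mul]
  rw [Finset.sum_congr rfl fun x _ => h1 x, Finset.sum_neg_distrib]
  have h2 : (∑ x : ι n, A x.swap x.swap) = ∑ x : ι n, A.diag x :=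
    (Fintype.sum_equiv σswap (fun x => A.diag x) (fun x => A x.swap x.swap)
      (fun x => by simp [Matrix.diag_apply])).symm
  rw [h2]

lemma inSp_add_theta (A : Matrix (ι n) (ι n) ℝ) :
    InSp (A + stdJ n * Aᵀ * stdJ n) := by
  intro x y
  simp only [Matrix.add_apply, theta_apply, swap_swap, ε_swap]
  rcases x with i|i <;> rcases y with j|j <;> norm_num [ε] <;> ring

lemma inM_sub_theta (A : Matrix (ι n) (ι n) ℝ) :
    InM (A - stdJ n * Aᵀ * stdJ n) := by
  intro x y
  simp only [Matrix.sub_apply, theta_apply, swap_swap, ε_swap]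
  rcases x with i|i <;> rcases y with j|j <;> norm_num [ε] <;> ring

section WithS

variable (S : LieSubalgebra ℝ (Matrix (ι n) (ι n) ℝ))

lemma S_sum_mem {α : Type*} (s : Finset α) (f : α → Matrix (ι n) (ι n) ℝ)
    (h : ∀ a ∈ s, f a ∈ S) : (∑ a ∈ s, f a) ∈ S :=
  Finset.sum_induction f (· ∈ S) (fun _ _ ha hb => S.add_mem ha hb) S.zero_mem h

variable (hS : ∀ A : Matrix (ι n) (ι n) ℝ, InSp A → A ∈ S)

include hS

/-- spectral extraction along a diagonal symplectic element. -/
lemma extract (d : ι n → ℝ) (hd : ∀ x, d x.swap = -d x)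
    (hr : ∀ x, d x = 1 ∨ d x = 0 ∨ d x = -1) (t : ℝ) (ht : t = 1 ∨ t = -1)
    {v : Matrix (ι n) (ι n) ℝ} (hv : v ∈ S) :
    (Matrix.of fun x y => if d x - d y = t then v x y else 0) ∈ S := by
  have hD : Matrix.diagonal d ∈ S := hS _ (inSp_diagonal d hd)
  let step : ℝ → Matrix (ι n) (ι n) ℝ → Matrix (ι n) (ι n) ℝ :=
    fun c w => ⁅Matrix.diagonal d, w⁆ + c • w
  have mstep : ∀ c w, w ∈ S → step c w ∈ S :=
    fun c w hw => S.add_mem (S.lie_mem hD hw) (S.smul_mem _ hw)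
  have estep : ∀ c (w : Matrix (ι n) (ι n) ℝ) x y,
      (step c w) x y = (d x - d y + c) * w x y := by
    intro c w x y
    show (⁅Matrix.diagonal d, w⁆ + c • w) x y = _
    rw [Matrix.add_apply, lie_diag_apply, Matrix.smul_apply, smul_eq_mul]
    ring
  have m4 : step (-2) (step 0 (step t (step 2 v))) ∈ S :=
    mstep _ _ (mstep _ _ (mstep _ _ (mstep _ _ hv)))
  have key : (Matrix.of fun x y => if d x - d y = t then v x y else 0)
      = (-(1:ℝ)/6) • step (-2) (step 0 (step t (step 2 v))) := by
    ext x y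
    rw [Matrix.of_apply, Matrix.smul_apply, smul_eq_mul, estep, estep, estep, estep]
    rcases hr x with hx | hx | hx <;> rcases hr y with hy | hy | hy <;>
      rcases ht with ht' | ht' <;> rw [hx, hy, ht'] <;> norm_num <;> ring
  rw [key]
  exact S.smul_mem _ m4

/-- isolation of a single `G p q` from an element of `S ∩ m` with nonzero
off-diagonal entry. -/
lemma isolate {v : Matrix (ι n) (ι n) ℝ} (hv : v ∈ S) (hm : InM v)
    {p q : ι n} (hpq : p ≠ q) (hqsp : q ≠ p.swap) :
    (v p q) • G p q ∈ S := by
  have hw1 : (Matrix.of fun x y => if χ p x - χ p y = 1 then v x y else 0) ∈ S :=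
    extract S hS (χ p) (χ_swap p) (χ_range p) 1 (Or.inl rfl) hv
  set w1 : Matrix (ι n) (ι n) ℝ :=
    Matrix.of fun x y => if χ p x - χ p y = 1 then v x y else 0 with hw1def
  have hw2 : (Matrix.of fun x y => if χ q x - χ q y = -1 then w1 x y else 0) ∈ S :=
    extract S hS (χ q) (χ_swap q) (χ_range q) (-1) (Or.inr rfl) hw1
  have hqp : q ≠ p := hpq.symm
  have hpsq : p ≠ q.swap := ne_swap_symm hqsp
  have hsqp : q.swap ≠ p := ne_swap_left hqsp
  have hkey : (Matrix.of fun x y => if χ q x - χ q y = -1 then w1 x y else 0)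
      = (v p q) • G p q := by
    ext x y
    rw [Matrix.of_apply, Matrix.smul_apply, smul_eq_mul, G_apply]
    by_cases c1 : x = p ∧ y = q
    · obtain ⟨rfl, rfl⟩ := c1
      have houter : χ y x - χ y y = -1 := by
        rw [χ_self, χ_other hpq hpsq]; norm_num
      have hinner : χ x x - χ x y = 1 := by
        rw [χ_self, χ_other hqp hqsp]; norm_num
      have hc2 : ¬ (x = y.swap ∧ y = x.swap) := fun hc => hpsq hc.1
      rw [if_pos houter, hw1def, Matrix.of_apply, if_pos hinner,
        if_pos ⟨rfl, rfl⟩, if_neg hc2, mul_zero, add_zero, mul_one]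
    · by_cases c2 : x = q.swap ∧ y = p.swap
      · obtain ⟨rfl, rfl⟩ := c2
        have houter : χ q q.swap - χ q p.swap = -1 := by
          rw [χ_swap_self, χ_other hqsp.symm (swap_ne_swap hpq)]; norm_num
        have hinner : χ p q.swap - χ p p.swap = 1 := by
          rw [χ_swap_self, χ_other hsqp (swap_ne_swap hqp)]; norm_num
        have hc1 : ¬ (p = Sum.swap q ∧ q = Sum.swap p) := fun hc => hpsq hc.1
        have hc2 : p = (Sum.swap p).swap ∧ q = (Sum.swap q).swap := by
          rw [swap_swap, swap_swap]; exact ⟨rfl, rfl⟩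
        rw [if_pos houter, hw1def, Matrix.of_apply, if_pos hinner,
          if_neg hc1, if_pos hc2, mul_one]
        have hent := hm q.swap p.swap
        rw [swap_swap, swap_swap, ε_swap, ε_swap] at hent
        rw [hent]; ring
      · have hc1 : ¬ (p = x ∧ q = y) := fun hc => c1 ⟨hc.1.symm, hc.2.symm⟩
        have hc2 : ¬ (p = y.swap ∧ q = x.swap) := by
          rintro ⟨hc1', hc2'⟩
          exact c2 ⟨by rw [hc2', swap_swap], by rw [hc1', swap_swap]⟩
        rw [if_neg hc1, if_neg hc2, mul_zero, add_zero, mul_zero]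
        by_cases houter : χ q x - χ q y = -1
        · rw [if_pos houter, hw1def, Matrix.of_apply]
          rcases chi_diff_neg_one houter with ⟨hyq, hxq, hxsq⟩ | ⟨hxsq, hyq, hysq⟩
          · split
            · rename_i hcond1
              rcases chi_diff_one hcond1 with ⟨hxp, -⟩ | ⟨hysp, -⟩
              · exact absurd ⟨hxp, hyq⟩ c1
              · exact absurd (hyq ▸ hysp : q = p.swap) hqsp
            · rfl
          · split
            · rename_i hcond1
              rcases chi_diff_one hcond1 with ⟨hxp, -⟩ | ⟨hysp, -⟩
              · exact absurd (hxp ▸ hxsq : p = q.swap) hpsq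
              · exact absurd ⟨hxsq, hysp⟩ c2
            · rfl
        · rw [if_neg houter]
  rw [← hkey]
  exact hw2

/-- reachability: from one good `G p q` in `S`, all of them are in `S`. -/
lemma reach {p q : ι n} (hpq : p ≠ q) (hqsp : q ≠ p.swap) (hG : G p q ∈ S) :
    ∀ x y : ι n, x ≠ y → y ≠ x.swap → G x y ∈ S := by
  have hFS : ∀ a b : ι n, F a b ∈ S := fun a b => hS _ (inSp_F a b)
  have hES : ∀ a : ι n, E a a.swap ∈ S := fun a => hS _ (inSp_E_swap a)
  have M5 : ∀ {x q' : ι n}, x ≠ q' → q' ≠ x.swap → G x q' ∈ S → G x.swap q' ∈ S := by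
    intro x q' h1 h2 hG'
    have hE : E x.swap x ∈ S := by
      have := hES x.swap; rwa [swap_swap] at this
    have := S.lie_mem hE hG'
    rwa [move5 h1 h2] at this
  have M4 : ∀ {x q' : ι n}, x ≠ q' → q' ≠ x.swap → G x q' ∈ S → G x q'.swap ∈ S := by
    intro x q' h1 h2 hG'
    have := S.lie_mem (hES q') hG'
    rw [move4 h1 h2] at this
    have := S.neg_mem this
    rwa [neg_neg] at this
  have M3 : ∀ {a b : ι n}, G a b ∈ S → G b.swap a.swap ∈ S := by
    intro a b h
    rw [G_swap]
    exact S.smul_mem _ h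
  have M1 : ∀ {a b x : ι n}, b ≠ a.swap → x ≠ a → x ≠ a.swap → x ≠ b → x ≠ b.swap →
      G a b ∈ S → G x b ∈ S := by
    intro a b x h0 h1 h2 h3 h4 hG'
    have := S.lie_mem (hFS x a) hG'
    rwa [move1 h0 h1 h2 h3 h4] at this
  have M2 : ∀ {a b y : ι n}, b ≠ a.swap → y ≠ a → y ≠ b.swap → G a b ∈ S → G a y ∈ S := by
    intro a b y h0 h1 h2 hG'
    have := S.lie_mem (hFS b y) hG'
    rw [move2 h0 h1 h2] at this
    have := S.neg_mem this
    rwa [neg_neg] at this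
  intro x y hxy hysx
  have step1 : ∃ w : ι n, x ≠ w ∧ w ≠ x.swap ∧ G x w ∈ S := by
    by_cases hxp : x = p
    · subst hxp; exact ⟨q, hpq, hqsp, hG⟩
    by_cases hxsp : x = p.swap
    · subst hxsp
      have hA : G p.swap q ∈ S := M5 hpq hqsp hG
      have h2' : q ≠ (p.swap).swap := by rw [swap_swap]; exact hpq.symm
      exact ⟨q, hqsp.symm, h2', hA⟩
    by_cases hxq : x = q
    · subst hxq
      have h1 : G x.swap p.swap ∈ S := M3 hG
      have h2 : x.swap ≠ p.swap := swap_ne_swap hpq.symm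
      have h3 : p.swap ≠ (x.swap).swap := by rw [swap_swap]; exact hqsp.symm
      have := M5 h2 h3 h1
      rw [swap_swap] at this
      exact ⟨p.swap, hqsp, swap_ne_swap hpq, this⟩
    by_cases hxsq : x = q.swap
    · subst hxsq
      exact ⟨p.swap, swap_ne_swap hpq.symm,
        by rw [swap_swap]; exact hqsp.symm, M3 hG⟩
    · exact ⟨q, hxq, ne_swap_symm hxsq, M1 hqsp hxp hxsp hxq hxsq hG⟩
  obtain ⟨w, hxw, hwsx, hGw⟩ := step1
  by_cases hyw : y = w
  · subst hyw; exact hGw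
  by_cases hysw : y = w.swap
  · subst hysw; exact M4 hxw hwsx hGw
  · exact M2 hwsx hxy.symm hysw hGw

/-- diagonal differences are all in `S`. -/
lemma reachD {p q : ι n} (hpq : p ≠ q) (hqsp : q ≠ p.swap) (hG : G p q ∈ S) :
    ∀ x y : ι n, Dm x - Dm y ∈ S := by
  have hall := reach S hS hpq hqsp hG
  have key : ∀ {a b : ι n}, a ≠ b → b ≠ a.swap → Dm b - Dm a ∈ S := by
    intro a b h1 h2
    have := S.lie_mem (hS _ (inSp_F b a)) (hall a b h1 h2)
    rwa [moveD h2] at this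
  intro x y
  by_cases h1 : y = x
  · subst h1; rw [sub_self]; exact S.zero_mem
  by_cases h2 : y = x.swap
  · subst h2; rw [Dm_swap, sub_self]; exact S.zero_mem
  · exact key h1 (ne_swap_symm h2)

/-- spanning: every traceless element of `m` lies in `S`. -/
lemma span_step (hn : 0 < n) {p q : ι n} (hpq : p ≠ q) (hqsp : q ≠ p.swap)
    (hG : G p q ∈ S) :
    ∀ Z : Matrix (ι n) (ι n) ℝ, InM Z → Z.trace = 0 → Z ∈ S := by
  intro Z hmZ htr
  have hall := reach S hS hpq hqsp hG
  have halld := reachD S hS hpq hqsp hG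
  have htr' : (∑ x : ι n, Z x x) = 0 := htr
  -- the total sum identity
  have key : (∑ x : ι n, ∑ y : ι n, Z x y • G x y) = (2:ℝ) • Z := by
    have h1 : (∑ x : ι n, ∑ y : ι n, Z x y • G x y)
        = (∑ x : ι n, ∑ y : ι n, Z x y • E x y)
          + (∑ x : ι n, ∑ y : ι n, (Z x y * (ε x * ε y)) • E y.swap x.swap) := by
      rw [← Finset.sum_add_distrib]
      refine Finset.sum_congr rfl fun x _ => ?_
      rw [← Finset.sum_add_distrib]
      refine Finset.sum_congr rfl fun y _ => ?_
      rw [G, smul_add, smul_smul]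
    have hE : (∑ x : ι n, ∑ y : ι n, Z x y • E x y) = Z := by
      nth_rewrite 2 [Matrix.matrix_eq_sum_single Z]
      refine Finset.sum_congr rfl fun x _ => Finset.sum_congr rfl fun y _ => ?_
      rw [E, Matrix.smul_single, smul_eq_mul, mul_one]
    have h2 : (∑ x : ι n, ∑ y : ι n, (Z x y * (ε x * ε y)) • E y.swap x.swap) = Z := by
      rw [Finset.sum_comm]
      calc (∑ y : ι n, ∑ x : ι n, (Z x y * (ε x * ε y)) • E y.swap x.swap)
          = ∑ y : ι n, ∑ x : ι n, (Z x.swap y.swap * (ε x.swap * ε y.swap)) • E y x := by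
            refine Fintype.sum_equiv σswap _ _ fun y => ?_
            refine Fintype.sum_equiv σswap _ _ fun x => ?_
            simp only [σswap_apply, swap_swap]
        _ = ∑ y : ι n, ∑ x : ι n, Z y x • E y x := by
            refine Finset.sum_congr rfl fun y _ => Finset.sum_congr rfl fun x _ => ?_
            congr 1
            rw [ε_swap, ε_swap, neg_mul_neg, hmZ y x]
            ring
        _ = Z := by
            nth_rewrite 2 [Matrix.matrix_eq_sum_single Z]
            refine Finset.sum_congr rfl fun x _ => Finset.sum_congr rfl fun y _ => ?_
            rw [E, Matrix.smul_single, smul_eq_mul, mul_one]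
    rw [h1, hE, h2, two_smul]
  -- split the sum into off-diagonal and diagonal parts
  have split : ∀ x : ι n, (∑ y : ι n, Z x y • G x y)
      = (∑ y : ι n, (if x = y then 0 else Z x y) • G x y) + Z x x • Dm x := by
    intro x
    have hterm : ∀ y : ι n, Z x y • G x y
        = (if x = y then 0 else Z x y) • G x y + (if x = y then Z x y else 0) • G x y := by
      intro y
      by_cases h : x = y <;> simp [h]
    rw [Finset.sum_congr rfl fun y _ => hterm y, Finset.sum_add_distrib]
    congr 1
    rw [Finset.sum_eq_single x]
    · rw [if_pos rfl, G_self]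
    · intro y _ hyx
      rw [if_neg fun hc => hyx hc.symm, zero_smul]
    · intro h; exact absurd (Finset.mem_univ x) h
  have mem1 : (∑ x : ι n, ∑ y : ι n, (if x = y then 0 else Z x y) • G x y) ∈ S := by
    refine S_sum_mem S _ _ fun x _ => S_sum_mem S _ _ fun y _ => ?_
    by_cases h1 : x = y
    · rw [if_pos h1, zero_smul]; exact S.zero_mem
    · rw [if_neg h1]
      by_cases h2 : y = x.swap
      · rw [h2, G_swap_self, smul_zero]; exact S.zero_mem
      · exact S.smul_mem _ (hall x y h1 h2)
  have mem2 : (∑ x : ι n, Z x x • Dm x) ∈ S := by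
    set x0 : ι n := Sum.inl ⟨0, hn⟩ with hx0
    have hrw : (∑ x : ι n, Z x x • Dm x)
        = (∑ x : ι n, Z x x • (Dm x - Dm x0)) + (∑ x : ι n, Z x x) • Dm x0 := by
      rw [Finset.sum_smul, ← Finset.sum_add_distrib]
      refine Finset.sum_congr rfl fun x _ => ?_
      rw [smul_sub, sub_add_cancel]
    rw [hrw, htr', zero_smul, add_zero]
    exact S_sum_mem S _ _ fun x _ => S.smul_mem _ (halld x x0)
  have memtot : ((2:ℝ) • Z) ∈ S := by
    rw [← key, Finset.sum_congr rfl fun x _ => split x, Finset.sum_add_distrib]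
    exact S.add_mem mem1 mem2
  have : Z = (2:ℝ)⁻¹ • ((2:ℝ) • Z) := by
    rw [smul_smul]; norm_num
  rw [this]
  exact S.smul_mem _ memtot

/-- from a nonzero traceless element of `S ∩ m`, obtain a good pair. -/
lemma getGood (hn : 0 < n) {v : Matrix (ι n) (ι n) ℝ} (hv : v ∈ S) (hm : InM v)
    (hne : v ≠ 0) (htr : v.trace = 0) :
    ∃ p q : ι n, p ≠ q ∧ q ≠ p.swap ∧ G p q ∈ S := by
  by_cases hoff : ∃ p q : ι n, p ≠ q ∧ v p q ≠ 0
  · obtain ⟨p, q, hpq, hvpq⟩ := hoff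
    have hqsp : q ≠ p.swap := fun hc => hvpq (by rw [hc]; exact InM.swap_self_zero hm p)
    have hiso := isolate S hS hv hm hpq hqsp
    refine ⟨p, q, hpq, hqsp, ?_⟩
    have h2 := S.smul_mem (v p q)⁻¹ hiso
    rwa [smul_smul, inv_mul_cancel₀ hvpq, one_smul] at h2
  · push_neg at hoff
    set d : ι n → ℝ := fun x => v x x with hd
    have hveq : v = Matrix.diagonal d := by
      ext a b
      by_cases h : a = b
      · subst h; rw [Matrix.diagonal_apply_eq]
      · rw [Matrix.diagonal_apply_ne _ h]; exact hoff a b h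
    have hsw : ∀ a : ι n, d a.swap = d a := by
      intro a
      have h3 := hm a a
      rw [ε_mul_self, one_mul] at h3
      exact h3.symm
    have hex : ∃ i j : Fin n, d (Sum.inl i) ≠ d (Sum.inl j) := by
      by_contra hcon
      push_neg at hcon
      apply hne
      have hall0 : ∀ x : ι n, d x = d (Sum.inl ⟨0, hn⟩) := by
        intro x
        rcases x with i | i
        · exact hcon i ⟨0, hn⟩
        · have h1 : d (Sum.inr i) = d (Sum.inl i) := hsw (Sum.inl i)
          rw [h1]; exact hcon i ⟨0, hn⟩
      have htr2 : (∑ x : ι n, d x) = 0 := htr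
      rw [Finset.sum_congr rfl fun x _ => hall0 x, Finset.sum_const, Finset.card_univ,
        nsmul_eq_mul] at htr2
      have hcard : 0 < Fintype.card (ι n) := by
        rw [Fintype.card_sum, Fintype.card_fin]
        omega
      have hzero : d (Sum.inl ⟨0, hn⟩) = 0 :=
        (mul_eq_zero.mp htr2).resolve_left (ne_of_gt (Nat.cast_pos.mpr hcard))
      rw [hveq]
      ext a b
      rw [Matrix.diagonal, Matrix.of_apply, Matrix.zero_apply]
      split
      · rw [hall0 a, hzero]
      · rfl
    obtain ⟨i, j, hij⟩ := hex
    have hpq : (Sum.inl i : ι n) ≠ Sum.inl j := fun hc => hij (congrArg d hc)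
    have hqsp : (Sum.inl j : ι n) ≠ (Sum.inl i).swap := by simp [Sum.swap]
    have hbr := S.lie_mem (hS _ (inSp_F (Sum.inl i) (Sum.inl j))) hv
    rw [moveDiag v d hveq hsw (Sum.inl i) (Sum.inl j)] at hbr
    have hne2 : d (Sum.inl j) - d (Sum.inl i) ≠ 0 := sub_ne_zero_of_ne (Ne.symm hij)
    refine ⟨Sum.inl i, Sum.inl j, hpq, hqsp, ?_⟩
    have h2 := S.smul_mem (d (Sum.inl j) - d (Sum.inl i))⁻¹ hbr
    rwa [smul_smul, inv_mul_cancel₀ hne2, one_smul] at h2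

end WithS

end SpSlAux

open SpSlAux in
/-- For `n ≥ 1`, every Lie subalgebra `S` of the Lie algebra of real
`2n × 2n` matrices (with bracket `[X, Y] = XY − YX`) satisfying
`sp(2n, ℝ) ⊆ S ⊆ sl(2n, ℝ)` is equal to `sp(2n, ℝ)` or to `sl(2n, ℝ)`:
there is no intermediate Lie subalgebra. -/
theorem no_intermediate_subalgebra_sp_sl_real
    (n : ℕ) (hn : 1 ≤ n)
    (S : LieSubalgebra ℝ (Matrix (Fin n ⊕ Fin n) (Fin n ⊕ Fin n) ℝ))
    (hsp : {X : Matrix (Fin n ⊕ Fin n) (Fin n ⊕ Fin n) ℝ |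
        Xᵀ * stdJ n + stdJ n * X = 0} ⊆ (S : Set _))
    (hsl : (S : Set _) ⊆ {X : Matrix (Fin n ⊕ Fin n) (Fin n ⊕ Fin n) ℝ |
        X.trace = 0}) :
    (S : Set _) = {X : Matrix (Fin n ⊕ Fin n) (Fin n ⊕ Fin n) ℝ |
        Xᵀ * stdJ n + stdJ n * X = 0} ∨
    (S : Set _) = {X : Matrix (Fin n ⊕ Fin n) (Fin n ⊕ Fin n) ℝ | X.trace = 0} := by
  classical
  by_cases hsub : (S : Set _) ⊆ {X : Matrix (Fin n ⊕ Fin n) (Fin n ⊕ Fin n) ℝ |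
      Xᵀ * stdJ n + stdJ n * X = 0}
  · exact Or.inl (Set.Subset.antisymm hsub hsp)
  right
  apply Set.Subset.antisymm hsl
  have hS : ∀ A : Matrix (ι n) (ι n) ℝ, InSp A → A ∈ S :=
    fun A hA => hsp ((mem_sp_iff A).mpr hA)
  obtain ⟨X, hXS, hXsp⟩ := Set.not_subset.mp hsub
  have hXS' : X ∈ S := hXS
  have hθS : stdJ n * Xᵀ * stdJ n ∈ S := by
    have h1 : X + stdJ n * Xᵀ * stdJ n ∈ S := hS _ (inSp_add_theta X)
    have h2 := S.sub_mem h1 hXS'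
    rwa [add_sub_cancel_left] at h2
  have hvS : X - stdJ n * Xᵀ * stdJ n ∈ S := S.sub_mem hXS' hθS
  have hmv : InM (X - stdJ n * Xᵀ * stdJ n) := inM_sub_theta X
  have hXtr : X.trace = 0 := hsl hXS
  have htrv : (X - stdJ n * Xᵀ * stdJ n).trace = 0 := by
    rw [Matrix.trace_sub, trace_theta, hXtr]; ring
  have hvne : X - stdJ n * Xᵀ * stdJ n ≠ 0 := by
    intro h0
    apply hXsp
    show Xᵀ * stdJ n + stdJ n * X = 0
    rw [mem_sp_iff]
    intro x y
    have h1 : X x y - (stdJ n * Xᵀ * stdJ n) x y = 0 := by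
      have := Matrix.ext_iff.mpr h0 x y
      rwa [Matrix.sub_apply] at this
    rw [theta_apply] at h1
    linarith
  obtain ⟨p, q, hpq, hqsp, hG⟩ := getGood S hS hn hvS hmv hvne htrv
  intro Y hY
  have hYtr : Y.trace = 0 := hY
  have hYm : Y - stdJ n * Yᵀ * stdJ n ∈ S :=
    span_step S hS hn hpq hqsp hG _ (inM_sub_theta Y)
      (by rw [Matrix.trace_sub, trace_theta, hYtr]; ring)
  have hYp : Y + stdJ n * Yᵀ * stdJ n ∈ S := hS _ (inSp_add_theta Y)
  have h2Y : (2:ℝ) • Y ∈ S := by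
    have hsum := S.add_mem hYp hYm
    have hid : (Y + stdJ n * Yᵀ * stdJ n) + (Y - stdJ n * Yᵀ * stdJ n) = (2:ℝ) • Y := by
      rw [two_smul]; abel
    rwa [hid] at hsum
  have : Y = (2:ℝ)⁻¹ • ((2:ℝ) • Y) := by rw [smul_smul]; norm_num
  rw [this]
  exact S.smul_mem _ h2Y
end

section
/- Let m ≥ 3. Let 𝔥 ⊂ so(m+1,ℂ) be the subalgebra consisting of those skew-symmetric (m+1)×(m+1) complex matrices whose last row and last column vanish (a copy of so(m,ℂ)). Then every complex Lie subalgebra S with 𝔥 ⊆ S ⊆ so(m+1,ℂ) is equal to 𝔥 or to so(m+1,ℂ); in other words, there is no intermediate Lie subalgebra so(m,ℂ) ⊊ S ⊊ so(m+1,ℂ). -/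
open Matrix

attribute [local instance] LieRing.ofAssociativeRing

variable {m : ℕ}

private noncomputable def vv (m : ℕ) (k : Fin m) : Matrix (Fin (m+1)) (Fin (m+1)) ℂ :=
  Matrix.single k.castSucc (Fin.last m) 1 - Matrix.single (Fin.last m) k.castSucc 1

private noncomputable def hh (m : ℕ) (i j : Fin m) : Matrix (Fin (m+1)) (Fin (m+1)) ℂ :=
  Matrix.single i.castSucc j.castSucc 1 - Matrix.single j.castSucc i.castSucc 1

private lemma csl (k : Fin m) : k.castSucc ≠ Fin.last m := (Fin.castSucc_lt_last k).ne

private lemma std_transpose {n : Type*} [DecidableEq n] (i j : n) (c : ℂ) :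
    (Matrix.single i j c)ᵀ = Matrix.single j i c := by
  ext a b
  simp [Matrix.single, transpose_apply, and_comm]

private lemma lie_hh_vv (i j k : Fin m) :
    ⁅hh m i j, vv m k⁆ =
      (if j = k then vv m i else 0) - (if i = k then vv m j else 0) := by
  have hci : Function.Injective (Fin.castSucc : Fin m → Fin (m+1)) :=
    Fin.castSucc_injective m
  rw [Ring.lie_def]
  unfold hh vv
  rcases eq_or_ne j k with hjk | hjk <;> rcases eq_or_ne i k with hik | hik <;>
    simp_all [sub_mul, mul_sub, Matrix.single_mul_single_same,
      Matrix.single_mul_single_of_ne, csl, (csl _).symm, hci.ne, Ne.symm] <;>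
    abel

private lemma vv_skew (k : Fin m) : (vv m k)ᵀ = -(vv m k) := by
  unfold vv; rw [transpose_sub, std_transpose, std_transpose, neg_sub]

private lemma hh_mem_low (i j : Fin m) :
    (hh m i j)ᵀ = -(hh m i j) ∧
      ∀ a, hh m i j a (Fin.last m) = 0 ∧ hh m i j (Fin.last m) a = 0 := by
  constructor
  · unfold hh; rw [transpose_sub, std_transpose, std_transpose, neg_sub]
  · intro a
    unfold hh
    constructor <;>
      simp [Matrix.sub_apply, Matrix.single_apply_of_col_ne _ _ (csl _),
        Matrix.single_apply_of_row_ne (csl _)]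

private lemma vv_apply_cs_last (k l : Fin m) :
    vv m k l.castSucc (Fin.last m) = if k = l then 1 else 0 := by
  unfold vv
  have hci : Function.Injective (Fin.castSucc : Fin m → Fin (m+1)) :=
    Fin.castSucc_injective m
  rcases eq_or_ne k l with h | h <;>
    simp [h, Matrix.sub_apply, Matrix.single_apply_of_ne, (csl _).symm, hci.ne]

private lemma vv_apply_last_cs (k l : Fin m) :
    vv m k (Fin.last m) l.castSucc = if k = l then -1 else 0 := by
  unfold vv
  have hci : Function.Injective (Fin.castSucc : Fin m → Fin (m+1)) :=
    Fin.castSucc_injective m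
  rcases eq_or_ne k l with h | h <;>
    simp [h, Matrix.sub_apply, Matrix.single_apply_of_ne, csl, hci.ne]

private lemma vv_apply_last_last (k : Fin m) :
    vv m k (Fin.last m) (Fin.last m) = 0 := by
  unfold vv
  simp [Matrix.sub_apply, Matrix.single_apply_of_ne, csl, (csl _).symm]

private lemma sum_entry_cs (C : Matrix (Fin (m+1)) (Fin (m+1)) ℂ) (l : Fin m) :
    (∑ k : Fin m, C k.castSucc (Fin.last m) • vv m k) l.castSucc (Fin.last m)
      = C l.castSucc (Fin.last m) := by
  simp [Matrix.sum_apply, vv_apply_cs_last, mul_ite, Finset.sum_ite_eq']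

private lemma sum_entry_sc (C : Matrix (Fin (m+1)) (Fin (m+1)) ℂ) (l : Fin m) :
    (∑ k : Fin m, C k.castSucc (Fin.last m) • vv m k) (Fin.last m) l.castSucc
      = -C l.castSucc (Fin.last m) := by
  simp [Matrix.sum_apply, vv_apply_last_cs, mul_ite, Finset.sum_ite_eq']

private lemma sum_entry_ll (C : Matrix (Fin (m+1)) (Fin (m+1)) ℂ) :
    (∑ k : Fin m, C k.castSucc (Fin.last m) • vv m k) (Fin.last m) (Fin.last m) = 0 := by
  simp [Matrix.sum_apply, vv_apply_last_last]

private lemma decomp (C : Matrix (Fin (m+1)) (Fin (m+1)) ℂ) (hC : Cᵀ = -C) :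
    (C - ∑ k : Fin m, C k.castSucc (Fin.last m) • vv m k)ᵀ
        = -(C - ∑ k : Fin m, C k.castSucc (Fin.last m) • vv m k) ∧
      ∀ i, (C - ∑ k : Fin m, C k.castSucc (Fin.last m) • vv m k) i (Fin.last m) = 0 ∧
        (C - ∑ k : Fin m, C k.castSucc (Fin.last m) • vv m k) (Fin.last m) i = 0 := by
  have hsk : ∀ a b, C b a = -C a b := fun a b => congrFun (congrFun hC a) b
  have hll : C (Fin.last m) (Fin.last m) = 0 := by
    have h := hsk (Fin.last m) (Fin.last m)
    linear_combination h / 2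
  constructor
  · rw [transpose_sub, transpose_sum, hC]
    simp only [transpose_smul, vv_skew, smul_neg, Finset.sum_neg_distrib]
    abel
  · intro i
    rcases Fin.eq_castSucc_or_eq_last i with ⟨l, rfl⟩ | rfl
    · constructor
      · rw [Matrix.sub_apply, sum_entry_cs, sub_self]
      · rw [Matrix.sub_apply, sum_entry_sc, hsk l.castSucc (Fin.last m)]
        ring
    · constructor <;> rw [Matrix.sub_apply, sum_entry_ll, hll, sub_self]

private lemma lie_sum' {ι : Type*} (s : Finset ι) (x : Matrix (Fin (m+1)) (Fin (m+1)) ℂ)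
    (f : ι → Matrix (Fin (m+1)) (Fin (m+1)) ℂ) :
    ⁅x, ∑ i ∈ s, f i⁆ = ∑ i ∈ s, ⁅x, f i⁆ := by
  classical
  induction s using Finset.induction with
  | empty => simp
  | insert _ _ h ih => rw [Finset.sum_insert h, Finset.sum_insert h, lie_add, ih]

private lemma three_distinct (hm : 3 ≤ m) (k0 : Fin m) :
    ∃ a b : Fin m, a ≠ b ∧ a ≠ k0 ∧ b ≠ k0 := by
  have h0 : (0:ℕ) < m := by omega
  have h1 : (1:ℕ) < m := by omega
  have h2 : (2:ℕ) < m := by omega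
  by_cases e0 : k0 = ⟨0, h0⟩
  · exact ⟨⟨1, h1⟩, ⟨2, h2⟩, by simp [Fin.ext_iff, e0], by simp [Fin.ext_iff, e0],
      by simp [Fin.ext_iff, e0]⟩
  · by_cases e1 : k0 = ⟨1, h1⟩
    · exact ⟨⟨0, h0⟩, ⟨2, h2⟩, by simp [Fin.ext_iff, e1], by simp [Fin.ext_iff, e1],
        by simp [Fin.ext_iff, e1]⟩
    · exact ⟨⟨0, h0⟩, ⟨1, h1⟩, by simp [Fin.ext_iff],
        fun h => e0 h.symm, fun h => e1 h.symm⟩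


/-- Let `m ≥ 3`.  Let `𝔥 ⊂ so(m+1, ℂ)` be the subalgebra of
skew-symmetric `(m+1) × (m+1)` complex matrices whose last row and last column
vanish (a copy of `so(m, ℂ)`).  Then every complex Lie subalgebra `S` with
`𝔥 ⊆ S ⊆ so(m+1, ℂ)` equals `𝔥` or `so(m+1, ℂ)`: there is no intermediate
Lie subalgebra `so(m, ℂ) ⊊ S ⊊ so(m+1, ℂ)`. -/
theorem no_intermediate_subalgebra_so_so_complex
    (m : ℕ) (hm : 3 ≤ m)
    (S : LieSubalgebra ℂ (Matrix (Fin (m + 1)) (Fin (m + 1)) ℂ))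
    (hlow : {A : Matrix (Fin (m + 1)) (Fin (m + 1)) ℂ |
        Aᵀ = -A ∧ ∀ i, A i (Fin.last m) = 0 ∧ A (Fin.last m) i = 0} ⊆ (S : Set _))
    (hup : (S : Set _) ⊆ {A : Matrix (Fin (m + 1)) (Fin (m + 1)) ℂ | Aᵀ = -A}) :
    (S : Set _) = {A : Matrix (Fin (m + 1)) (Fin (m + 1)) ℂ |
        Aᵀ = -A ∧ ∀ i, A i (Fin.last m) = 0 ∧ A (Fin.last m) i = 0} ∨
    (S : Set _) = {A : Matrix (Fin (m + 1)) (Fin (m + 1)) ℂ | Aᵀ = -A} := by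
  classical
  by_cases hS : (S : Set _) ⊆ {A : Matrix (Fin (m + 1)) (Fin (m + 1)) ℂ |
      Aᵀ = -A ∧ ∀ i, A i (Fin.last m) = 0 ∧ A (Fin.last m) i = 0}
  · exact Or.inl (subset_antisymm hS hlow)
  right
  apply subset_antisymm hup
  -- extract an element of S outside the lower algebra
  obtain ⟨A, hAS, hA⟩ := Set.not_subset.mp hS
  have hAskew : Aᵀ = -A := hup hAS
  have hsk : ∀ a b, A b a = -A a b := fun a b => congrFun (congrFun hAskew a) b
  have hll : A (Fin.last m) (Fin.last m) = 0 := by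
    have h := hsk (Fin.last m) (Fin.last m); linear_combination h / 2
  have hA' : ¬ ∀ i, A i (Fin.last m) = 0 ∧ A (Fin.last m) i = 0 := by
    intro h; exact hA ⟨hAskew, h⟩
  push_neg at hA'
  obtain ⟨i, hi⟩ := hA'
  have hicol : A i (Fin.last m) ≠ 0 := by
    intro hc
    exact hi hc (by rw [hsk i (Fin.last m), hc, neg_zero])
  obtain ⟨k0, rfl⟩ | rfl := Fin.eq_castSucc_or_eq_last i
  swap
  · exact absurd hll hicol
  set c : Fin m → ℂ := fun k => A k.castSucc (Fin.last m) with hc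
  set w : Matrix (Fin (m+1)) (Fin (m+1)) ℂ := ∑ k : Fin m, c k • vv m k with hwdef
  -- w ∈ S
  have hAwS : A - w ∈ S := hlow (decomp A hAskew)
  have hwS : w ∈ S := by
    have := S.sub_mem hAS hAwS
    rwa [sub_sub_cancel] at this
  have hhS : ∀ i j : Fin m, hh m i j ∈ S := fun i j => hlow (hh_mem_low i j)
  -- pick auxiliary indices
  obtain ⟨a, b, hab, hak0, hbk0⟩ := three_distinct hm k0
  -- first bracket
  have hw1 : ⁅hh m b k0, w⁆ = c k0 • vv m b - c b • vv m k0 := by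
    rw [hwdef, lie_sum']
    simp only [lie_smul, lie_hh_vv, smul_sub, smul_ite, smul_zero]
    rw [Finset.sum_sub_distrib]
    simp [Finset.sum_ite_eq, hbk0]
  have hu1S : c k0 • vv m b - c b • vv m k0 ∈ S := by
    rw [← hw1]; exact S.lie_mem (hhS b k0) hwS
  have hw2 : ⁅hh m a b, c k0 • vv m b - c b • vv m k0⁆ = c k0 • vv m a := by
    rw [lie_sub, lie_smul, lie_smul, lie_hh_vv, lie_hh_vv,
      if_pos rfl, if_neg hab, if_neg hbk0, if_neg hak0]
    simp
  have hvaS : vv m a ∈ S := by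
    have h1 : c k0 • vv m a ∈ S := by
      rw [← hw2]; exact S.lie_mem (hhS a b) hu1S
    have h2 := S.smul_mem (c k0)⁻¹ h1
    rwa [smul_smul, inv_mul_cancel₀ hicol, one_smul] at h2
  have hvS : ∀ l : Fin m, vv m l ∈ S := by
    intro l
    by_cases hla : l = a
    · rw [hla]; exact hvaS
    · have h : ⁅hh m l a, vv m a⁆ = vv m l := by
        rw [lie_hh_vv, if_pos rfl, if_neg hla, sub_zero]
      rw [← h]; exact S.lie_mem (hhS l a) hvaS
  -- conclude
  intro B hB
  have hBskew : Bᵀ = -B := hB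
  have hsumS : (∑ k : Fin m, B k.castSucc (Fin.last m) • vv m k) ∈ S := by
    rw [← LieSubalgebra.mem_toSubmodule]
    exact Submodule.sum_mem _ fun k _ =>
      (LieSubalgebra.mem_toSubmodule S).mpr (S.smul_mem _ (hvS k))
  have hBlow : B - (∑ k : Fin m, B k.castSucc (Fin.last m) • vv m k) ∈ S :=
    hlow (decomp B hBskew)
  have := S.add_mem hBlow hsumS
  rwa [sub_add_cancel] at this
end

section
/- Let m ≥ 3. Let 𝔥 ⊂ so(m+1,ℂ) be the subalgebra of skew-symmetric (m+1)×(m+1) complex matrices whose last row and last column vanish (a copy of so(m,ℂ)). Then every complex linear subspace W with 𝔥 ⊆ W ⊆ so(m+1,ℂ) and [A, X] ∈ W for all A ∈ 𝔥 and X ∈ W is equal to 𝔥 or to so(m+1,ℂ). (Equivalently, the quotient so(m+1,ℂ)/so(m,ℂ), with the adjoint action of so(m,ℂ), is an irreducible so(m,ℂ)-module.) -/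
open Matrix



variable {m : ℕ}

def Gm (m : ℕ) (v : Fin (m+1) → ℂ) : Matrix (Fin (m+1)) (Fin (m+1)) ℂ :=
  fun p q => if q = Fin.last m then v p else if p = Fin.last m then -(v q) else 0

def Fm (m : ℕ) (i j : Fin (m+1)) : Matrix (Fin (m+1)) (Fin (m+1)) ℂ :=
  Matrix.single i j 1 - Matrix.single j i 1

lemma Gm_smul (c : ℂ) (v : Fin (m+1) → ℂ) : Gm m (c • v) = c • Gm m v := by
  ext p q
  simp only [Gm, Matrix.smul_apply, Pi.smul_apply, smul_eq_mul]
  split_ifs <;> ring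

lemma Gm_transpose (v : Fin (m+1) → ℂ) (hv : v (Fin.last m) = 0) :
    (Gm m v)ᵀ = -(Gm m v) := by
  ext p q
  simp only [Gm, transpose_apply, Matrix.neg_apply]
  split_ifs <;> simp_all

lemma stdBasis_transpose (i j : Fin (m+1)) :
    (Matrix.single i j (1:ℂ))ᵀ = Matrix.single j i 1 := by
  ext p q
  simp only [transpose_apply, Matrix.single, of_apply]
  split_ifs <;> tauto

lemma Fm_mulVec (i j : Fin (m+1)) (v : Fin (m+1) → ℂ) :
    (Fm m i j).mulVec v =
      fun p => (if p = i then v j else 0) - (if p = j then v i else 0) := by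
  funext p
  simp [Fm, sub_mulVec, Matrix.single_mulVec, Function.update_apply]

lemma Fm_mem (i j : Fin (m+1)) (hi : i ≠ Fin.last m) (hj : j ≠ Fin.last m) :
    (Fm m i j)ᵀ = -(Fm m i j) ∧
      ∀ p, Fm m i j p (Fin.last m) = 0 ∧ Fm m i j (Fin.last m) p = 0 := by
  constructor
  · simp only [Fm, transpose_sub, stdBasis_transpose]
    abel
  · intro p
    constructor <;>
    · simp only [Fm, Matrix.sub_apply, Matrix.single, of_apply]
      split_ifs <;> simp_all

lemma bracket_Gm (A : Matrix (Fin (m+1)) (Fin (m+1)) ℂ)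
    (hA : Aᵀ = -A) (hA0 : ∀ i, A i (Fin.last m) = 0 ∧ A (Fin.last m) i = 0)
    (v : Fin (m+1) → ℂ) :
    A * Gm m v - Gm m v * A = Gm m (A.mulVec v) := by
  have hskew : ∀ p q : Fin (m+1), A q p = -A p q := by
    intro p q
    have := congrFun (congrFun hA p) q
    simpa [transpose_apply] using this
  ext p q
  rw [Matrix.sub_apply, Matrix.mul_apply, Matrix.mul_apply]
  by_cases hq : q = Fin.last m
  · subst hq
    have h1 : ∑ k, A p k * Gm m v k (Fin.last m) = ∑ k, A p k * v k :=
      Finset.sum_congr rfl fun k _ => by simp [Gm]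
    have h2 : ∑ k, Gm m v p k * A k (Fin.last m) = 0 :=
      Finset.sum_eq_zero fun k _ => by rw [(hA0 k).1, mul_zero]
    rw [h1, h2, sub_zero]
    simp [Gm, mulVec, dotProduct]
  · by_cases hp : p = Fin.last m
    · subst hp
      have h1 : ∑ k, A (Fin.last m) k * Gm m v k q = 0 :=
        Finset.sum_eq_zero fun k _ => by rw [(hA0 k).2, zero_mul]
      have h2 : ∑ k, Gm m v (Fin.last m) k * A k q = ∑ k, -(v k) * A k q :=
        Finset.sum_congr rfl fun k _ => by
          by_cases hk : k = Fin.last m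
          · subst hk; simp [Gm, (hA0 q).2]
          · simp [Gm, hk, hq]
      have h3 : Gm m (A.mulVec v) (Fin.last m) q = -((A.mulVec v) q) := by
        simp [Gm, hq]
      rw [h1, h2, zero_sub, h3, neg_inj]
      simp only [mulVec, dotProduct]
      refine Finset.sum_congr rfl fun k _ => ?_
      rw [hskew q k]; ring
    · have h1 : ∑ k, A p k * Gm m v k q = 0 :=
        Finset.sum_eq_zero fun k _ => by
          by_cases hk : k = Fin.last m
          · subst hk; simp [Gm, hq, (hA0 p).1]
          · simp [Gm, hk, hq]
      have h2 : ∑ k, Gm m v p k * A k q = 0 :=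
        Finset.sum_eq_zero fun k _ => by
          by_cases hk : k = Fin.last m
          · subst hk; simp [Gm, hq, hp, (hA0 q).2]
          · simp [Gm, hk, hq, hp]
      rw [h1, h2, sub_zero]
      simp [Gm, hq, hp]

lemma sub_Gm_mem (Y : Matrix (Fin (m+1)) (Fin (m+1)) ℂ) (hY : Yᵀ = -Y) :
    (Y - Gm m (fun p => Y p (Fin.last m)))ᵀ = -(Y - Gm m (fun p => Y p (Fin.last m))) ∧
      ∀ i, (Y - Gm m (fun p => Y p (Fin.last m))) i (Fin.last m) = 0 ∧
        (Y - Gm m (fun p => Y p (Fin.last m))) (Fin.last m) i = 0 := by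
  have hskew : ∀ p q : Fin (m+1), Y q p = -Y p q := by
    intro p q
    have := congrFun (congrFun hY p) q
    simpa [transpose_apply] using this
  have hll : Y (Fin.last m) (Fin.last m) = 0 := by
    have := hskew (Fin.last m) (Fin.last m)
    linear_combination this / 2
  constructor
  · rw [transpose_sub, hY, Gm_transpose (fun p => Y p (Fin.last m)) hll]
    abel
  · intro i
    constructor
    · simp [Gm]
    · by_cases hi : i = Fin.last m
      · subst hi; simp [Gm, hll]
      · have h : Gm m (fun p => Y p (Fin.last m)) (Fin.last m) i = -(Y i (Fin.last m)) := by
          simp [Gm, hi]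
        rw [Matrix.sub_apply, h, hskew i (Fin.last m)]
        ring

lemma exists_ne3 (hm : 3 ≤ m) (a b c : Fin (m+1)) :
    ∃ i : Fin (m+1), i ≠ a ∧ i ≠ b ∧ i ≠ c := by
  by_contra h
  push_neg at h
  have hsub : (Finset.univ : Finset (Fin (m+1))) ⊆ {a, b, c} := by
    intro i _
    simp only [Finset.mem_insert, Finset.mem_singleton]
    by_cases h1 : i = a
    · exact Or.inl h1
    by_cases h2 : i = b
    · exact Or.inr (Or.inl h2)
    exact Or.inr (Or.inr (h i h1 h2))
  have hc := Finset.card_le_card hsub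
  simp only [Finset.card_univ, Fintype.card_fin] at hc
  have h3 : ({a, b, c} : Finset (Fin (m+1))).card ≤ 3 := by
    apply le_trans (Finset.card_insert_le _ _)
    have := Finset.card_insert_le b ({c} : Finset (Fin (m+1)))
    simp at this ⊢
    omega
  omega

lemma Gm_eq_sum (v : Fin (m+1) → ℂ) :
    Gm m v = ∑ k, v k • Gm m (Pi.single k 1) := by
  ext p q
  rw [Matrix.sum_apply]
  by_cases hq : q = Fin.last m
  · subst hq
    simp [Gm, Pi.single_apply, mul_ite]
  · by_cases hp : p = Fin.last m
    · subst hp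
      simp [Gm, hq, Pi.single_apply, mul_ite]
    · simp [Gm, hq, hp]

/-- Let `m ≥ 3`.  Let `𝔥 ⊂ so(m+1, ℂ)` be the subalgebra of
skew-symmetric `(m+1) × (m+1)` complex matrices whose last row and last column
vanish (a copy of `so(m, ℂ)`).  Then every complex linear subspace `W` with
`𝔥 ⊆ W ⊆ so(m+1, ℂ)` that is stable under the adjoint action of `𝔥`
(`[A, X] = AX − XA ∈ W` for all `A ∈ 𝔥`, `X ∈ W`) equals `𝔥` or `so(m+1, ℂ)`.
(Equivalently, `so(m+1, ℂ)/so(m, ℂ)` with the adjoint action of `so(m, ℂ)` is an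
irreducible `so(m, ℂ)`-module.) -/
theorem so_div_so_irreducible
    (m : ℕ) (hm : 3 ≤ m)
    (W : Submodule ℂ (Matrix (Fin (m + 1)) (Fin (m + 1)) ℂ))
    (hlow : {A : Matrix (Fin (m + 1)) (Fin (m + 1)) ℂ |
        Aᵀ = -A ∧ ∀ i, A i (Fin.last m) = 0 ∧ A (Fin.last m) i = 0} ⊆ (W : Set _))
    (hup : (W : Set _) ⊆ {A : Matrix (Fin (m + 1)) (Fin (m + 1)) ℂ | Aᵀ = -A})
    (hstable : ∀ A : Matrix (Fin (m + 1)) (Fin (m + 1)) ℂ,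
        (Aᵀ = -A ∧ ∀ i, A i (Fin.last m) = 0 ∧ A (Fin.last m) i = 0) →
        ∀ X ∈ W, A * X - X * A ∈ W) :
    (W : Set _) = {A : Matrix (Fin (m + 1)) (Fin (m + 1)) ℂ |
        Aᵀ = -A ∧ ∀ i, A i (Fin.last m) = 0 ∧ A (Fin.last m) i = 0} ∨
    (W : Set _) = {A : Matrix (Fin (m + 1)) (Fin (m + 1)) ℂ | Aᵀ = -A} := by
  by_cases hzero : ∀ X ∈ W, ∀ p, X p (Fin.last m) = 0
  · left
    apply Set.Subset.antisymm _ hlow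
    intro X hX
    have hskew : Xᵀ = -X := hup hX
    refine ⟨hskew, fun i => ⟨hzero X hX i, ?_⟩⟩
    have h := congrFun (congrFun hskew i) (Fin.last m)
    simp only [transpose_apply, Matrix.neg_apply] at h
    rw [h, hzero X hX i, neg_zero]
  · right
    push_neg at hzero
    obtain ⟨X, hXW, j, hXj⟩ := hzero
    have hskewX : Xᵀ = -X := hup hXW
    -- `Gm` of the last column of any element of `W` lies in `W`
    have hGm_mem : ∀ Y ∈ W, Gm m (fun p => Y p (Fin.last m)) ∈ W := by
      intro Y hY
      have h2 : Y - Gm m (fun p => Y p (Fin.last m)) ∈ W := hlow (sub_Gm_mem Y (hup hY))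
      have h3 := W.sub_mem hY h2
      simpa using h3
    -- stability of `Gm`-membership under  `Fm` action
    have hstep : ∀ (i k : Fin (m+1)), i ≠ Fin.last m → k ≠ Fin.last m →
        ∀ v : Fin (m+1) → ℂ, Gm m v ∈ W → Gm m ((Fm m i k).mulVec v) ∈ W := by
      intro i k hi hk v hv
      rw [← bracket_Gm (Fm m i k) (Fm_mem i k hi hk).1 (Fm_mem i k hi hk).2 v]
      exact hstable _ (Fm_mem i k hi hk) _ hv
    set v : Fin (m+1) → ℂ := fun p => X p (Fin.last m) with hv
    have hvW : Gm m v ∈ W := hGm_mem X hXW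
    have hXll : X (Fin.last m) (Fin.last m) = 0 := by
      have h := congrFun (congrFun hskewX (Fin.last m)) (Fin.last m)
      simp only [transpose_apply, Matrix.neg_apply] at h
      linear_combination h / 2
    have hjlast : j ≠ Fin.last m := by
      intro hj; apply hXj; rw [hj]; exact hXll
    have key1 : ∀ k, k ≠ Fin.last m → k ≠ j → Gm m (Pi.single k 1) ∈ W := by
      intro k hk hkj
      obtain ⟨i, hij, hik, hilast⟩ := exists_ne3 hm j k (Fin.last m)
      set w := (Fm m i j).mulVec v with hw
      have hwW : Gm m w ∈ W := hstep i j hilast hjlast v hvW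
      set u := (Fm m k i).mulVec w with hu
      have huW : Gm m u ∈ W := hstep k i hk hilast w hwW
      have hwi : w i = v j := by rw [hw, Fm_mulVec]; simp [hij]
      have hwk : w k = 0 := by rw [hw, Fm_mulVec]; simp [Ne.symm hik, hkj]
      have hu_eq : u = (v j) • (Pi.single k 1 : Fin (m+1) → ℂ) := by
        funext p
        rw [hu, Fm_mulVec]
        simp only [Pi.smul_apply, smul_eq_mul]
        by_cases hpk : p = k
        · subst hpk; simp [Ne.symm hik, hwi]
        · simp [hpk, hwk, Pi.single_apply]
      have h5 : (v j)⁻¹ • Gm m u ∈ W := W.smul_mem _ huW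
      rw [hu_eq, Gm_smul, smul_smul, inv_mul_cancel₀ hXj, one_smul] at h5
      exact h5
    have key : ∀ k, k ≠ Fin.last m → Gm m (Pi.single k 1) ∈ W := by
      intro k hk
      by_cases hkj : k = j
      · subst hkj
        obtain ⟨i, hij, -, hilast⟩ := exists_ne3 hm k k (Fin.last m)
        have hiW : Gm m (Pi.single i 1) ∈ W := key1 i hilast hij
        have hW2 : Gm m ((Fm m k i).mulVec (Pi.single i 1)) ∈ W := hstep k i hk hilast _ hiW
        have heq : (Fm m k i).mulVec (Pi.single i (1:ℂ)) = Pi.single k 1 := by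
          funext p
          rw [Fm_mulVec]
          by_cases hpk : p = k
          · subst hpk; simp [Ne.symm hij, Pi.single_apply, hij]
          · simp [hpk, Pi.single_apply, Ne.symm hij]
        rw [heq] at hW2; exact hW2
      · exact key1 k hk hkj
    apply Set.Subset.antisymm hup
    intro Y hY
    have hYskew : Yᵀ = -Y := hY
    have hsub : Y - Gm m (fun p => Y p (Fin.last m)) ∈ W := hlow (sub_Gm_mem Y hYskew)
    have hYll : Y (Fin.last m) (Fin.last m) = 0 := by
      have h := congrFun (congrFun hYskew (Fin.last m)) (Fin.last m)
      simp only [transpose_apply, Matrix.neg_apply] at h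
      linear_combination h / 2
    have hGmY : Gm m (fun p => Y p (Fin.last m)) ∈ W := by
      rw [Gm_eq_sum]
      apply Submodule.sum_mem
      intro k _
      by_cases hk : k = Fin.last m
      · subst hk
        rw [hYll, zero_smul]
        exact W.zero_mem
      · exact W.smul_mem _ (key k hk)
    have h6 := W.add_mem hsub hGmY
    simpa using h6
end

section
/- Let p ≥ 1 and q ≥ 0 be integers with (p−1) + q ≥ 3. Set D = diag(1,…,1,−1,…,−1) (p entries equal to 1 followed by q entries equal to −1) and let so(p,q) = {X real (p+q)×(p+q) matrix : Xᵀ D + D X = 0}. Let 𝔥 ⊂ so(p,q) be the subalgebra of matrices whose first row and first column vanish (a copy of so(p−1,q)). Then every Lie subalgebra S with 𝔥 ⊆ S ⊆ so(p,q) equals 𝔥 or so(p,q); in other words, there is no intermediate Lie subalgebra so(p−1,q) ⊊ S ⊊ so(p,q). -/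
open Matrix

attribute [local instance 100] LieRing.ofAssociativeRing

/-- The Gram matrix `D = diag(1,…,1,−1,…,−1)` (`p` ones followed by `q` minus-ones)
of the standard quadratic form of signature `(p, q)` on `ℝ^{p+q}`. -/
def gramPQ (p q : ℕ) : Matrix (Fin (p + q)) (Fin (p + q)) ℝ :=
  Matrix.diagonal fun i => if (i : ℕ) < p then 1 else -1

namespace SoMax

def eps (p q : ℕ) (i : Fin (p + q)) : ℝ := if (i : ℕ) < p then 1 else -1

lemma eps_sq (p q : ℕ) (i : Fin (p+q)) : eps p q i * eps p q i = 1 := by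
  unfold eps; split <;> norm_num

lemma eps_ne (p q : ℕ) (i : Fin (p+q)) : eps p q i ≠ 0 := by
  unfold eps; split <;> norm_num

lemma eps_zero (p q : ℕ) (hp : 1 ≤ p) (i : Fin (p+q)) (h : (i:ℕ) = 0) : eps p q i = 1 := by
  unfold eps; rw [if_pos]; omega

def soP (p q : ℕ) (X : Matrix (Fin (p+q)) (Fin (p+q)) ℝ) : Prop :=
  ∀ i j, X j i * eps p q j + eps p q i * X i j = 0

lemma mem_g_iff (p q : ℕ) (X : Matrix (Fin (p+q)) (Fin (p+q)) ℝ) :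
    Xᵀ * gramPQ p q + gramPQ p q * X = 0 ↔ soP p q X := by
  have h : ∀ i j, (Xᵀ * gramPQ p q + gramPQ p q * X) i j
      = X j i * eps p q j + eps p q i * X i j := by
    intro i j
    simp [gramPQ, eps, Matrix.mul_diagonal, Matrix.diagonal_mul, Matrix.add_apply,
      Matrix.transpose_apply]
  constructor
  · intro h0 i j; rw [← h, h0]; simp
  · intro hs; ext i j; rw [Matrix.zero_apply, h]; exact hs i j

def Bmat (p q : ℕ) (z : Fin (p+q)) (v : Fin (p+q) → ℝ) :
    Matrix (Fin (p+q)) (Fin (p+q)) ℝ :=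
  Matrix.of fun k l => (if k = z then v l else 0) - (if l = z then eps p q k * v k else 0)

lemma Bmat_so (p q : ℕ) (hp : 1 ≤ p) (z : Fin (p+q)) (hz : (z:ℕ) = 0)
    (v : Fin (p+q) → ℝ) : soP p q (Bmat p q z v) := by
  intro k l
  simp only [Bmat, Matrix.of_apply]
  by_cases hk : k = z
  · subst hk
    by_cases hl : l = k
    · subst hl; rw [eps_zero p q hp l hz]; ring
    · simp [hl, eps_zero p q hp k hz]
      linear_combination (-v l) * eps_sq p q l
  · by_cases hl : l = z
    · subst hl
      simp [hk, eps_zero p q hp l hz]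
      linear_combination (-v k) * eps_sq p q k
    · simp [hk, hl]

lemma Bmat_smul (p q : ℕ) (z : Fin (p+q)) (c : ℝ) (v : Fin (p+q) → ℝ) :
    Bmat p q z (c • v) = c • Bmat p q z v := by
  ext k l
  simp only [Bmat, Matrix.of_apply, Matrix.smul_apply, Pi.smul_apply, smul_eq_mul]
  split_ifs <;> ring


lemma ite_sum {α : Type*} [Fintype α] (c : Prop) [Decidable c] (f : α → ℝ) :
    (if c then ∑ x, f x else 0) = ∑ x, (if c then f x else 0) := by
  split <;> simp

lemma soP_rel (p q : ℕ) {h : Matrix (Fin (p+q)) (Fin (p+q)) ℝ} (hso : soP p q h)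
    (k m : Fin (p+q)) : h k m = -(eps p q k * eps p q m * h m k) := by
  have h1 := hso k m
  have h2 := eps_sq p q k
  linear_combination eps p q k * h1 - h k m * h2

lemma bracket_Bmat (p q : ℕ) (z : Fin (p+q))
    (h : Matrix (Fin (p+q)) (Fin (p+q)) ℝ) (hso : soP p q h)
    (hh0 : ∀ k l : Fin (p+q), k = z ∨ l = z → h k l = 0) (v : Fin (p+q) → ℝ) :
    h * Bmat p q z v - Bmat p q z v * h
      = Bmat p q z (fun l => -∑ m, v m * h m l) := by
  ext k l
  have hR : Bmat p q z (fun l => -∑ m, v m * h m l) k l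
      = ∑ m, ((if k = z then -(v m * h m l) else 0)
          - (if l = z then eps p q k * -(v m * h m k) else 0)) := by
    simp only [Bmat, Matrix.of_apply]
    rw [Finset.sum_sub_distrib]
    congr 1
    · split <;> simp
    · split <;> simp [Finset.mul_sum]
  rw [hR]
  simp only [Matrix.sub_apply, Matrix.mul_apply, Bmat, Matrix.of_apply]
  rw [← Finset.sum_sub_distrib]
  refine Finset.sum_congr rfl fun m _ => ?_
  by_cases hm : m = z
  · subst hm
    simp [hh0 k m (Or.inr rfl), hh0 m l (Or.inl rfl), hh0 m k (Or.inl rfl)]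
  · by_cases hk : k = z <;> by_cases hl : l = z <;>
      simp [hm, hk, hl, hh0]
    rw [soP_rel p q hso k m]
    linear_combination (eps p q k * v m * h m k) * eps_sq p q m


def Gmat (p q : ℕ) (i j : Fin (p+q)) : Matrix (Fin (p+q)) (Fin (p+q)) ℝ :=
  Matrix.of fun k l => (if k = i ∧ l = j then 1 else 0)
    - (if k = j ∧ l = i then eps p q i * eps p q j else 0)

lemma Gmat_so (p q : ℕ) (i j : Fin (p+q)) (hij : i ≠ j) : soP p q (Gmat p q i j) := by
  intro k l
  simp only [Gmat, Matrix.of_apply]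
  by_cases hk : k = i <;> by_cases hl : l = j <;> by_cases hk2 : k = j <;>
    by_cases hl2 : l = i <;> simp_all <;>
    linear_combination (-eps p q i) * eps_sq p q j

lemma Gmat_zero (p q : ℕ) (z i j : Fin (p+q)) (hi : i ≠ z) (hj : j ≠ z)
    (k l : Fin (p+q)) (hkl : k = z ∨ l = z) : Gmat p q i j k l = 0 := by
  simp only [Gmat, Matrix.of_apply]
  rcases hkl with hk | hl
  · subst hk
    rw [if_neg, if_neg]
    · ring
    · rintro ⟨h1, -⟩; exact hj h1.symm
    · rintro ⟨h1, -⟩; exact hi h1.symm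
  · subst hl
    rw [if_neg, if_neg]
    · ring
    · rintro ⟨-, h1⟩; exact hi h1.symm
    · rintro ⟨-, h1⟩; exact hj h1.symm

lemma Gmat_sum (p q : ℕ) (i j : Fin (p+q)) (v : Fin (p+q) → ℝ) :
    (fun l => -∑ m, v m * Gmat p q i j m l)
      = fun l => eps p q i * eps p q j * (if l = i then v j else 0)
          - (if l = j then v i else 0) := by
  funext l
  simp only [Gmat, Matrix.of_apply, mul_sub, mul_ite, mul_one, mul_zero, ite_and,
    Finset.sum_sub_distrib, Finset.sum_ite_eq', Finset.mem_univ, if_true]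
  split_ifs <;> ring


lemma soP_diag (p q : ℕ) {X : Matrix (Fin (p+q)) (Fin (p+q)) ℝ} (hX : soP p q X)
    (k : Fin (p+q)) : X k k = 0 := by
  have h1 := hX k k
  have h2 := eps_ne p q k
  have h3 : eps p q k * (2 * X k k) = 0 := by linear_combination h1
  rcases mul_eq_zero.mp h3 with h | h
  · exact absurd h h2
  · linarith

def evec (p q : ℕ) (k : Fin (p+q)) : Fin (p+q) → ℝ := fun l => if l = k then 1 else 0

def Blin (p q : ℕ) (z : Fin (p+q)) :
    (Fin (p+q) → ℝ) →ₗ[ℝ] Matrix (Fin (p+q)) (Fin (p+q)) ℝ where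
  toFun := Bmat p q z
  map_add' u v := by
    ext k l
    simp only [Bmat, Matrix.of_apply, Pi.add_apply, Matrix.add_apply]
    split_ifs <;> ring
  map_smul' c v := by
    ext k l
    simp only [Bmat, Matrix.of_apply, Pi.smul_apply, Matrix.smul_apply, smul_eq_mul,
      RingHom.id_apply]
    split_ifs <;> ring

end SoMax

/-- Let `p ≥ 1`, `q ≥ 0` with `(p−1) + q ≥ 3`, and let
`so(p, q) = {X : Xᵀ D + D X = 0}` for `D = diag(1,…,1,−1,…,−1)`.  Let
`𝔥 ⊂ so(p, q)` be the subalgebra of matrices whose first row and first column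
vanish (a copy of `so(p−1, q)`).  Then every Lie subalgebra `S` with
`𝔥 ⊆ S ⊆ so(p, q)` equals `𝔥` or `so(p, q)`: there is no intermediate Lie
subalgebra `so(p−1, q) ⊊ S ⊊ so(p, q)`. -/
theorem no_intermediate_subalgebra_so_so_real
    (p q : ℕ) (hp : 1 ≤ p) (hpq : 3 ≤ (p - 1) + q)
    (S : LieSubalgebra ℝ (Matrix (Fin (p + q)) (Fin (p + q)) ℝ))
    (hlow : {X : Matrix (Fin (p + q)) (Fin (p + q)) ℝ |
        Xᵀ * gramPQ p q + gramPQ p q * X = 0 ∧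
          ∀ i j : Fin (p + q), ((i : ℕ) = 0 ∨ (j : ℕ) = 0) → X i j = 0} ⊆ (S : Set _))
    (hup : (S : Set _) ⊆ {X : Matrix (Fin (p + q)) (Fin (p + q)) ℝ |
        Xᵀ * gramPQ p q + gramPQ p q * X = 0}) :
    (S : Set _) = {X : Matrix (Fin (p + q)) (Fin (p + q)) ℝ |
        Xᵀ * gramPQ p q + gramPQ p q * X = 0 ∧
          ∀ i j : Fin (p + q), ((i : ℕ) = 0 ∨ (j : ℕ) = 0) → X i j = 0} ∨
    (S : Set _) = {X : Matrix (Fin (p + q)) (Fin (p + q)) ℝ |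
        Xᵀ * gramPQ p q + gramPQ p q * X = 0} := by
  classical
  obtain ⟨z, hz⟩ : ∃ z : Fin (p+q), (z:ℕ) = 0 := ⟨⟨0, by omega⟩, rfl⟩
  have hzeq : ∀ i : Fin (p+q), (i:ℕ) = 0 → i = z := fun i hi => Fin.ext (by omega)
  by_cases hS : ∀ X ∈ (S : Set (Matrix (Fin (p + q)) (Fin (p + q)) ℝ)), ∀ i j : Fin (p + q), ((i : ℕ) = 0 ∨ (j : ℕ) = 0) → X i j = 0
  · left
    apply Set.Subset.antisymm
    · intro X hX
      exact ⟨hup hX, hS X hX⟩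
    · exact hlow
  · right
    apply Set.Subset.antisymm hup
    push_neg at hS
    obtain ⟨X, hXS, i, j, hij0, hXij⟩ := hS
    have hXso : SoMax.soP p q X := (SoMax.mem_g_iff p q X).mp (hup hXS)
    -- the general "row-subtraction" fact
    have hrow : ∀ M : Matrix (Fin (p+q)) (Fin (p+q)) ℝ, SoMax.soP p q M →
        M - SoMax.Bmat p q z (fun l => M z l) ∈ (S : Set _) := by
      intro M hM
      apply hlow
      refine ⟨?_, ?_⟩
      · rw [SoMax.mem_g_iff]
        intro k l
        have h1 := hM k l
        have h2 := SoMax.Bmat_so p q hp z hz (fun l => M z l) k l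
        simp only [Matrix.sub_apply]
        linear_combination h1 - h2
      · intro k l hkl
        simp only [Matrix.sub_apply, SoMax.Bmat, Matrix.of_apply]
        rcases hkl with hk | hl
        · have hk' : k = z := hzeq k hk
          by_cases hlz : l = z
          · simp [hk', hlz, SoMax.soP_diag p q hM z, SoMax.eps_zero p q hp z hz]
          · simp [hk', hlz]
        · have hl' : l = z := hzeq l hl
          by_cases hkz : k = z
          · simp [hl', hkz, SoMax.soP_diag p q hM z, SoMax.eps_zero p q hp z hz]
          · simp only [hl', if_neg hkz, eq_self_iff_true, if_true]
            rw [SoMax.soP_rel p q hM k z, SoMax.eps_zero p q hp z hz]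
            ring
    -- nonzero first-row vector
    obtain ⟨j₀, hj₀z, haj⟩ : ∃ j₀ : Fin (p+q), j₀ ≠ z ∧ X z j₀ ≠ 0 := by
      rcases hij0 with h0 | h0
      · have hi : i = z := hzeq i h0
        rw [hi] at hXij
        refine ⟨j, fun hj => ?_, hXij⟩
        rw [hj] at hXij
        exact hXij (SoMax.soP_diag p q hXso z)
      · have hj : j = z := hzeq j h0
        rw [hj] at hXij
        refine ⟨i, fun hi => ?_, ?_⟩
        · rw [hi] at hXij
          exact hXij (SoMax.soP_diag p q hXso z)
        · rw [SoMax.soP_rel p q hXso z i]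
          exact neg_ne_zero.mpr (mul_ne_zero
            (mul_ne_zero (SoMax.eps_ne p q z) (SoMax.eps_ne p q i)) hXij)
    have haz : X z z = 0 := SoMax.soP_diag p q hXso z
    have hBaS : SoMax.Bmat p q z (fun l => X z l) ∈ S := by
      have h1 : SoMax.Bmat p q z (fun l => X z l)
          = X - (X - SoMax.Bmat p q z (fun l => X z l)) := by abel
      rw [h1]
      exact S.toSubmodule.sub_mem hXS (hrow X hXso)
    -- the step: bracketing with a generator
    have hstep : ∀ v : Fin (p+q) → ℝ, v z = 0 → SoMax.Bmat p q z v ∈ S →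
        ∀ i j : Fin (p+q), i ≠ z → j ≠ z → i ≠ j →
        SoMax.Bmat p q z (fun l => SoMax.eps p q i * SoMax.eps p q j *
            (if l = i then v j else 0) - (if l = j then v i else 0)) ∈ S ∧
          (SoMax.eps p q i * SoMax.eps p q j * (if z = i then v j else 0)
            - (if z = j then v i else 0)) = 0 := by
      intro v hvz hvS i j hi hj hij
      have hGso := SoMax.Gmat_so p q i j hij
      have hGz : ∀ k l : Fin (p+q), k = z ∨ l = z → SoMax.Gmat p q i j k l = 0 :=
        fun k l hkl => SoMax.Gmat_zero p q z i j hi hj k l hkl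
      have hGS : SoMax.Gmat p q i j ∈ (S : Set _) := by
        apply hlow
        refine ⟨(SoMax.mem_g_iff p q _).mpr hGso, ?_⟩
        intro k l hkl
        apply hGz
        rcases hkl with hk | hl
        · exact Or.inl (hzeq k hk)
        · exact Or.inr (hzeq l hl)
      have hbr : ⁅SoMax.Gmat p q i j, SoMax.Bmat p q z v⁆ ∈ S := S.lie_mem hGS hvS
      rw [Ring.lie_def] at hbr
      have heq := SoMax.bracket_Bmat p q z (SoMax.Gmat p q i j) hGso hGz v
      rw [SoMax.Gmat_sum p q i j v] at heq
      rw [heq] at hbr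
      refine ⟨hbr, ?_⟩
      rw [if_neg (fun h => hi h.symm), if_neg (fun h => hj h.symm)]
      ring
    -- scaling helper
    have hscale : ∀ (c : ℝ), c ≠ 0 → ∀ w : Fin (p+q) → ℝ,
        SoMax.Bmat p q z (c • w) ∈ S → SoMax.Bmat p q z w ∈ S := by
      intro c hc w hw
      have h1 : w = c⁻¹ • (c • w) := by
        rw [smul_smul, inv_mul_cancel₀ hc, one_smul]
      rw [h1, SoMax.Bmat_smul]
      exact S.toSubmodule.smul_mem _ hw
    -- pick two more indices
    obtain ⟨jb, kb, hjbz, hkbz, hjbkb, hjbj₀, hkbj₀⟩ :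
        ∃ jb kb : Fin (p+q), jb ≠ z ∧ kb ≠ z ∧ jb ≠ kb ∧ jb ≠ j₀ ∧ kb ≠ j₀ := by
      have h4 : 4 ≤ p + q := by omega
      have f1 : Fin (p+q) := ⟨1, by omega⟩
      refine ?_
      by_cases h1 : j₀ = ⟨1, by omega⟩
      · exact ⟨⟨2, by omega⟩, ⟨3, by omega⟩,
          Fin.ne_of_val_ne (by simp [hz]), Fin.ne_of_val_ne (by simp [hz]),
          Fin.ne_of_val_ne (by simp), by rw [h1]; exact Fin.ne_of_val_ne (by simp),
          by rw [h1]; exact Fin.ne_of_val_ne (by simp)⟩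
      · by_cases h2 : j₀ = ⟨2, by omega⟩
        · exact ⟨⟨1, by omega⟩, ⟨3, by omega⟩,
            Fin.ne_of_val_ne (by simp [hz]), Fin.ne_of_val_ne (by simp [hz]),
            Fin.ne_of_val_ne (by simp), by rw [h2]; exact Fin.ne_of_val_ne (by simp),
            by rw [h2]; exact Fin.ne_of_val_ne (by simp)⟩
        · exact ⟨⟨1, by omega⟩, ⟨2, by omega⟩,
            Fin.ne_of_val_ne (by simp [hz]), Fin.ne_of_val_ne (by simp [hz]),
            Fin.ne_of_val_ne (by simp), fun h => h1 h.symm, fun h => h2 h.symm⟩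
    -- first step : b
    have hb := hstep (fun l => X z l) haz hBaS jb j₀ hjbz hj₀z hjbj₀
    -- second step : c
    have hc := hstep _ hb.2 hb.1 kb jb hkbz hjbz (fun h => hjbkb h.symm)
    -- c is a nonzero multiple of evec kb
    have hcoeff : SoMax.eps p q kb * SoMax.eps p q jb *
        (SoMax.eps p q jb * SoMax.eps p q j₀ * X z j₀) ≠ 0 := by
      apply mul_ne_zero (mul_ne_zero (SoMax.eps_ne p q kb) (SoMax.eps_ne p q jb))
      exact mul_ne_zero (mul_ne_zero (SoMax.eps_ne p q jb) (SoMax.eps_ne p q j₀)) haj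
    have hceq : (fun l => SoMax.eps p q kb * SoMax.eps p q jb *
          (if l = kb then (SoMax.eps p q jb * SoMax.eps p q j₀ *
              (if jb = jb then X z j₀ else 0) - (if jb = j₀ then X z jb else 0)) else 0)
          - (if l = jb then (SoMax.eps p q jb * SoMax.eps p q j₀ *
              (if kb = jb then X z j₀ else 0) - (if kb = j₀ then X z jb else 0)) else 0))
        = (SoMax.eps p q kb * SoMax.eps p q jb *
            (SoMax.eps p q jb * SoMax.eps p q j₀ * X z j₀)) • SoMax.evec p q kb := by
      funext l
      simp only [SoMax.evec, Pi.smul_apply, smul_eq_mul, eq_self_iff_true, if_true,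
        if_neg hjbj₀, if_neg (fun h => hjbkb h.symm : ¬kb = jb), if_neg hkbj₀]
      split_ifs <;> ring
    have hekb : SoMax.Bmat p q z (SoMax.evec p q kb) ∈ S := by
      apply hscale _ hcoeff
      rw [← hceq]
      exact hc.1
    -- all basis vectors
    have he : ∀ m : Fin (p+q), m ≠ z → SoMax.Bmat p q z (SoMax.evec p q m) ∈ S := by
      intro m hm
      by_cases hmk : m = kb
      · subst hmk; exact hekb
      · have hez : SoMax.evec p q kb z = 0 := by
          simp [SoMax.evec, Ne.symm hkbz]
        have hs := hstep (SoMax.evec p q kb) hez hekb m kb hm hkbz hmk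
        have heq2 : (fun l => SoMax.eps p q m * SoMax.eps p q kb *
              (if l = m then SoMax.evec p q kb kb else 0)
              - (if l = kb then SoMax.evec p q kb m else 0))
            = (SoMax.eps p q m * SoMax.eps p q kb) • SoMax.evec p q m := by
          funext l
          simp only [SoMax.evec, Pi.smul_apply, smul_eq_mul, if_pos rfl, if_neg hmk]
          split_ifs <;> ring
        apply hscale _ (mul_ne_zero (SoMax.eps_ne p q m) (SoMax.eps_ne p q kb))
        rw [← heq2]
        exact hs.1
    -- finish
    intro Y hY
    have hYso : SoMax.soP p q Y := (SoMax.mem_g_iff p q Y).mp hY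
    have hrsum : (fun l => Y z l) = ∑ m, Y z m • SoMax.evec p q m := by
      funext l
      rw [Finset.sum_apply]
      simp only [SoMax.evec, Pi.smul_apply, smul_eq_mul, mul_ite, mul_one, mul_zero]
      rw [Finset.sum_ite_eq Finset.univ l (fun m => Y z m)]
      simp
    have hBr : SoMax.Bmat p q z (fun l => Y z l) ∈ S := by
      have hB1 : SoMax.Bmat p q z (fun l => Y z l)
          = SoMax.Blin p q z (fun l => Y z l) := rfl
      rw [hB1, hrsum, map_sum]
      apply S.toSubmodule.sum_mem
      intro m _
      rw [_root_.map_smul]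
      by_cases hm : m = z
      · rw [hm, SoMax.soP_diag p q hYso z, zero_smul]
        exact S.toSubmodule.zero_mem
      · exact S.toSubmodule.smul_mem _ (he m hm)
    have hfin : Y = (Y - SoMax.Bmat p q z (fun l => Y z l))
        + SoMax.Bmat p q z (fun l => Y z l) := by abel
    rw [hfin]
    exact S.toSubmodule.add_mem (hrow Y hYso) hBr
end

section
/- Let n ≥ 1 and let p be an integer with 0 < 2p < 2n. Let ω be an alternating 2p-multilinear real-valued form on ℝ^{2n} such that for every g ∈ SL(2n,ℝ), the linear complex structure J = g J₀ g⁻¹ (where J₀ = [[0,I],[−I,0]] in n×n block form) satisfies ω(J v₁, …, J v_{2p}) = ω(v₁, …, v_{2p}) for all v₁, …, v_{2p} ∈ ℝ^{2n}. Then ω = 0. -/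
open Matrix

/-- The standard linear complex structure `J₀ = [[0, I], [−I, 0]]` (in `n × n`
block form) on `ℝ^{2n}`. -/
def stdJR (n : ℕ) : Matrix (Fin n ⊕ Fin n) (Fin n ⊕ Fin n) ℝ :=
  Matrix.fromBlocks 0 1 (-1) 0

section Aux

variable {n : ℕ}

private lemma stdJR_mulVec_single (z : Fin n ⊕ Fin n) :
    (stdJR n).mulVec (Pi.single z (1:ℝ)) =
      (Sum.elim (fun _ => (-1:ℝ)) (fun _ => (1:ℝ)) z) •
        (Pi.single (Sum.swap z) (1:ℝ) : Fin n ⊕ Fin n → ℝ) := by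
  rw [Matrix.mulVec_single]
  funext x
  rcases z with j | j <;> rcases x with i | i <;>
    simp [stdJR, Matrix.fromBlocks, Matrix.one_apply, Pi.single_apply, Sum.swap, eq_comm] <;>
    (try split_ifs <;> norm_num)

private lemma permMatrix_mul_diag_mulVec_single (σ : Equiv.Perm (Fin n ⊕ Fin n))
    (dε : Fin n ⊕ Fin n → ℝ) (z : Fin n ⊕ Fin n) :
    (σ.permMatrix ℝ * Matrix.diagonal dε).mulVec (Pi.single z (1:ℝ)) =
      dε z • (Pi.single (σ.symm z) (1:ℝ) : Fin n ⊕ Fin n → ℝ) := by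
  rw [Matrix.mulVec_single_one]
  funext x
  rw [Matrix.col_apply, Matrix.mul_diagonal]
  simp only [Equiv.Perm.permMatrix, PEquiv.toMatrix_apply, Equiv.toPEquiv_apply,
    Option.mem_def, Option.some.injEq, Pi.smul_apply, Pi.single_apply, smul_eq_mul]
  by_cases h : z = σ x
  · simp [h, Equiv.symm_apply_apply, eq_comm]
  · have h2 : ¬ (x = σ.symm z) := fun hx => h (by simp [hx])
    have h3 : ¬ σ x = z := fun hx => h hx.symm
    simp [h, h2, h3]

private lemma arith_key (A B F G Q : ℝ) (hB : B ≠ 0) (hQ : Q = 1 ∨ Q = 2⁻¹)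
    (e1 : A * F = B * G) (e2 : A * (2 * Q) * F = B * 2⁻¹ * G) : G = 0 := by
  have hAF : A * F = 0 := by
    rcases hQ with h | h <;> rw [h] at e2 <;> nlinarith [e1, e2]
  have hBG : B * G = 0 := by rw [← e1]; exact hAF
  rcases mul_eq_zero.mp hBG with h | h
  · exact absurd h hB
  · exact h

end Aux

/-- Let `n ≥ 1` and `0 < 2p < 2n`.  Let `ω` be an alternating
`2p`-multilinear real-valued form on `ℝ^{2n}` which is invariant under every linear
complex structure `J = g J₀ g⁻¹` with `g ∈ SL(2n, ℝ)`, i.e.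
`ω(J v₁, …, J v_{2p}) = ω(v₁, …, v_{2p})` for all arguments.  Then `ω = 0`. -/
theorem alternating_form_invariant_under_all_complex_structures_is_zero
    (n p : ℕ) (hn : 1 ≤ n) (hp0 : 0 < 2 * p) (hp : 2 * p < 2 * n)
    (ω : AlternatingMap ℝ (Fin n ⊕ Fin n → ℝ) ℝ (Fin (2 * p)))
    (hinv : ∀ g : Matrix (Fin n ⊕ Fin n) (Fin n ⊕ Fin n) ℝ, g.det = 1 →
        ∀ v : Fin (2 * p) → (Fin n ⊕ Fin n → ℝ),
          ω (fun i => (g * stdJR n * g⁻¹).mulVec (v i)) = ω v) :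
    ω = 0 := by
  classical
  -- reduce to injective basis tuples
  apply Module.Basis.ext_alternating (Pi.basisFun ℝ (Fin n ⊕ Fin n))
  intro f hf
  simp only [Pi.basisFun_apply, AlternatingMap.zero_apply]
  -- main argument
  have h2p : 1 < 2 * p := by omega
  set i0 : Fin (2 * p) := ⟨0, hp0⟩ with hi0
  set i1 : Fin (2 * p) := ⟨1, h2p⟩ with hi1
  -- a coordinate not hit by f
  have hcard : ∃ w : Fin n ⊕ Fin n, ∀ i, f i ≠ w := by
    by_contra hcon
    push_neg at hcon
    have hsurj : Function.Surjective f := by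
      intro w; obtain ⟨i, hi⟩ := hcon w; exact ⟨i, hi⟩
    have := Fintype.card_le_of_surjective f hsurj
    simp [Fintype.card_sum] at this
    omega
  obtain ⟨w, hw⟩ := hcard
  have hswap_ne : ∀ z : Fin n ⊕ Fin n, Sum.swap z ≠ z := by rintro (j | j) <;> simp
  set s₀ : Fin n ⊕ Fin n := Sum.swap (f i0) with hs₀
  set σ : Equiv.Perm (Fin n ⊕ Fin n) := Equiv.swap s₀ w with hσ
  have hσσ : ∀ z, σ (σ z) = z := fun z => Equiv.swap_apply_self _ _ z
  have hσsymm : σ.symm = σ := Equiv.symm_swap _ _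
  set dε : Fin n ⊕ Fin n → ℝ := fun z => if z = w ∧ s₀ ≠ w then -1 else 1 with hdε
  have hdε_ne : ∀ z, dε z ≠ 0 := by
    intro z; simp only [hdε]; split <;> norm_num
  set g : Matrix (Fin n ⊕ Fin n) (Fin n ⊕ Fin n) ℝ :=
    σ.permMatrix ℝ * Matrix.diagonal dε with hg
  have hdetg : g.det = 1 := by
    rw [hg, Matrix.det_mul, Matrix.det_permutation, Matrix.det_diagonal]
    by_cases hsw : s₀ = w
    · have h1 : σ = Equiv.refl (Fin n ⊕ Fin n) := by rw [hσ, hsw, Equiv.swap_self]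
      have h2 : ∀ z, dε z = 1 := by intro z; simp [hdε, hsw]
      rw [h1]
      simp [h2]
    · have hprod : (∏ z : Fin n ⊕ Fin n, dε z) = -1 := by
        have h3 : ∀ z, dε z = if z = w then (-1:ℝ) else 1 := by
          intro z; simp [hdε, hsw]
        rw [Finset.prod_congr rfl fun z _ => h3 z, Finset.prod_ite_eq']
        simp
      rw [hprod, Equiv.Perm.sign_swap hsw]
      norm_num
  -- the scaling matrix
  have hwf1 : f i1 ≠ w := hw i1
  set d : Fin n ⊕ Fin n → ℝ := fun z => if z = w then 2 else if z = f i1 then 2⁻¹ else 1 with hd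
  have hdetH : (Matrix.diagonal d).det = 1 := by
    rw [Matrix.det_diagonal]
    have hsplit : ∀ z, d z = (if z = w then (2:ℝ) else 1) * (if z = f i1 then 2⁻¹ else 1) := by
      intro z
      simp only [hd]
      split_ifs with h1 h2 h3 <;> first
        | (exfalso; exact hwf1 (by rw [← h2, h1]))
        | ring
    rw [Finset.prod_congr rfl fun z _ => hsplit z, Finset.prod_mul_distrib,
      Finset.prod_ite_eq', Finset.prod_ite_eq']
    norm_num
  -- vectors and sign bookkeeping
  set y : Fin (2 * p) → Fin n ⊕ Fin n := fun i => σ (f i) with hy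
  set c : Fin n ⊕ Fin n → ℝ := Sum.elim (fun _ => (-1:ℝ)) (fun _ => (1:ℝ)) with hc
  set π : Fin (2 * p) → Fin n ⊕ Fin n := fun i => σ (Sum.swap (y i)) with hπ
  have hσy : ∀ i, σ (y i) = f i := fun i => hσσ (f i)
  have hgact : ∀ z, g.mulVec (Pi.single z (1:ℝ)) =
      dε z • (Pi.single (σ z) (1:ℝ) : Fin n ⊕ Fin n → ℝ) := by
    intro z
    rw [hg, permMatrix_mul_diag_mulVec_single σ dε z, hσsymm]
  have hJact : ∀ z, (stdJR n).mulVec (Pi.single z (1:ℝ)) =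
      c z • (Pi.single (Sum.swap z) (1:ℝ) : Fin n ⊕ Fin n → ℝ) := by
    intro z; exact stdJR_mulVec_single z
  -- invariance in usable form
  have use_inv : ∀ M : Matrix (Fin n ⊕ Fin n) (Fin n ⊕ Fin n) ℝ, M.det = 1 →
      ∀ x : Fin (2 * p) → (Fin n ⊕ Fin n → ℝ),
      ω (fun i => (M * stdJR n).mulVec (x i)) = ω (fun i => M.mulVec (x i)) := by
    intro M hM x
    have h1 := hinv M hM (fun i => M.mulVec (x i))
    have hMinv : M⁻¹ * M = 1 := Matrix.nonsing_inv_mul M (by rw [hM]; exact isUnit_one)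
    have h2 : (fun i => (M * stdJR n * M⁻¹).mulVec (M.mulVec (x i)))
        = fun i => (M * stdJR n).mulVec (x i) := by
      funext i
      rw [Matrix.mulVec_mulVec]
      congr 1
      rw [Matrix.mul_assoc (M * stdJR n), hMinv, Matrix.mul_one]
    rw [h2] at h1
    exact h1
  have T1 : ∀ i, (g * stdJR n).mulVec (Pi.single (y i) (1:ℝ))
      = (c (y i) * dε (Sum.swap (y i))) • (Pi.single (π i) (1:ℝ) : Fin n ⊕ Fin n → ℝ) := by
    intro i
    rw [← Matrix.mulVec_mulVec, hJact, Matrix.mulVec_smul, hgact, smul_smul]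
  have T2 : ∀ i, g.mulVec (Pi.single (y i) (1:ℝ))
      = dε (y i) • (Pi.single (f i) (1:ℝ) : Fin n ⊕ Fin n → ℝ) := by
    intro i; rw [hgact, hσy]
  have msu : ∀ (r : Fin (2 * p) → ℝ) (x : Fin (2 * p) → (Fin n ⊕ Fin n → ℝ)),
      ω (fun i => r i • x i) = (∏ i, r i) • ω x := by
    intro r x
    have := ω.toMultilinearMap.map_smul_univ r x
    simpa using this
  have Eq1 : (∏ i, (c (y i) * dε (Sum.swap (y i)))) •
        ω (fun i => (Pi.single (π i) (1:ℝ) : Fin n ⊕ Fin n → ℝ))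
      = (∏ i, dε (y i)) • ω (fun i => (Pi.single (f i) (1:ℝ) : Fin n ⊕ Fin n → ℝ)) := by
    have h1 := use_inv g hdetg (fun i => Pi.single (y i) (1:ℝ))
    rw [show (fun i => (g * stdJR n).mulVec (Pi.single (y i) (1:ℝ)))
        = fun i => (c (y i) * dε (Sum.swap (y i))) •
            (Pi.single (π i) (1:ℝ) : Fin n ⊕ Fin n → ℝ) from funext T1,
      show (fun i => g.mulVec (Pi.single (y i) (1:ℝ)))
        = fun i => dε (y i) • (Pi.single (f i) (1:ℝ) : Fin n ⊕ Fin n → ℝ) from funext T2,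
      msu, msu] at h1
    exact h1
  -- Equation 2 (with (diagonal d) * g)
  have hdact : ∀ z, (Matrix.diagonal d).mulVec (Pi.single z (1:ℝ))
      = d z • (Pi.single z (1:ℝ) : Fin n ⊕ Fin n → ℝ) := by
    intro z
    rw [Matrix.diagonal_mulVec_single]
    funext x
    simp [Pi.single_apply]
  have hdetHg : (Matrix.diagonal d * g).det = 1 := by
    rw [Matrix.det_mul, hdetH, hdetg, mul_one]
  have T3 : ∀ i, (Matrix.diagonal d * g * stdJR n).mulVec (Pi.single (y i) (1:ℝ))
      = ((c (y i) * dε (Sum.swap (y i))) * d (π i)) •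
          (Pi.single (π i) (1:ℝ) : Fin n ⊕ Fin n → ℝ) := by
    intro i
    rw [Matrix.mul_assoc, ← Matrix.mulVec_mulVec, T1, Matrix.mulVec_smul, hdact, smul_smul,
      mul_comm (c (y i) * dε (Sum.swap (y i))) (d (π i))]
  have T4 : ∀ i, (Matrix.diagonal d * g).mulVec (Pi.single (y i) (1:ℝ))
      = (dε (y i) * d (f i)) • (Pi.single (f i) (1:ℝ) : Fin n ⊕ Fin n → ℝ) := by
    intro i
    rw [← Matrix.mulVec_mulVec, T2, Matrix.mulVec_smul, hdact, smul_smul,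
      mul_comm (dε (y i)) (d (f i))]
  have Eq2 : (∏ i, ((c (y i) * dε (Sum.swap (y i))) * d (π i))) •
        ω (fun i => (Pi.single (π i) (1:ℝ) : Fin n ⊕ Fin n → ℝ))
      = (∏ i, (dε (y i) * d (f i))) •
        ω (fun i => (Pi.single (f i) (1:ℝ) : Fin n ⊕ Fin n → ℝ)) := by
    have h1 := use_inv (Matrix.diagonal d * g) hdetHg (fun i => Pi.single (y i) (1:ℝ))
    rw [show (fun i => (Matrix.diagonal d * g * stdJR n).mulVec (Pi.single (y i) (1:ℝ)))
        = fun i => ((c (y i) * dε (Sum.swap (y i))) * d (π i)) •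
            (Pi.single (π i) (1:ℝ) : Fin n ⊕ Fin n → ℝ) from funext T3,
      show (fun i => (Matrix.diagonal d * g).mulVec (Pi.single (y i) (1:ℝ)))
        = fun i => (dε (y i) * d (f i)) •
            (Pi.single (f i) (1:ℝ) : Fin n ⊕ Fin n → ℝ) from funext T4,
      msu, msu] at h1
    exact h1
  -- compute the products of d-values
  have hyi0 : y i0 = f i0 := by
    show σ (f i0) = f i0
    rw [hσ]
    exact Equiv.swap_apply_of_ne_of_ne (fun h => hswap_ne (f i0) h.symm) (hw i0)
  have hπi0 : π i0 = w := by
    show σ (Sum.swap (y i0)) = w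
    rw [hyi0, ← hs₀, hσ]
    exact Equiv.swap_apply_left _ _
  have hπinj : Function.Injective π := by
    intro a b hab
    apply hf
    have h1 : Sum.swap (y a) = Sum.swap (y b) := by
      have := congrArg σ hab
      rwa [hσσ, hσσ] at this
    have h2 : y a = y b := by
      have := congrArg Sum.swap h1
      rwa [Sum.swap_swap, Sum.swap_swap] at this
    have := congrArg σ h2
    rwa [hσy, hσy] at this
  have hprod_df : (∏ i, d (f i)) = 2⁻¹ := by
    have h1 : ∀ i, d (f i) = if i = i1 then (2⁻¹:ℝ) else 1 := by
      intro i
      simp only [hd]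
      rw [if_neg (hw i)]
      by_cases h : i = i1
      · rw [if_pos (by rw [h]), if_pos h]
      · rw [if_neg (fun hh => h (hf hh)), if_neg h]
    rw [Finset.prod_congr rfl fun i _ => h1 i, Finset.prod_ite_eq']
    simp
  have hprod_dπ : (∏ i, d (π i)) = 2 * (∏ i, if π i = f i1 then (2⁻¹:ℝ) else 1) := by
    have hsplit : ∀ i, d (π i)
        = (if π i = w then (2:ℝ) else 1) * (if π i = f i1 then 2⁻¹ else 1) := by
      intro i
      simp only [hd]
      split_ifs with h1 h2 h3 <;> first
        | (exfalso; exact hwf1 (by rw [← h2, h1]))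
        | ring
    rw [Finset.prod_congr rfl fun i _ => hsplit i, Finset.prod_mul_distrib]
    congr 1
    have h1 : ∀ i, (if π i = w then (2:ℝ) else 1) = if i = i0 then 2 else 1 := by
      intro i
      by_cases h : i = i0
      · rw [if_pos (by rw [h, hπi0]), if_pos h]
      · rw [if_neg (fun hh => h (hπinj (by rw [hh, hπi0]))), if_neg h]
    rw [Finset.prod_congr rfl fun i _ => h1 i, Finset.prod_ite_eq']
    simp
  have hQval : (∏ i, if π i = f i1 then (2⁻¹:ℝ) else 1) = 1 ∨
      (∏ i, if π i = f i1 then (2⁻¹:ℝ) else 1) = 2⁻¹ := by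
    by_cases hex : ∃ j, π j = f i1
    · obtain ⟨j, hj⟩ := hex
      right
      have h1 : ∀ i, (if π i = f i1 then (2⁻¹:ℝ) else 1) = if i = j then 2⁻¹ else 1 := by
        intro i
        by_cases h : i = j
        · rw [if_pos (by rw [h, hj]), if_pos h]
        · rw [if_neg (fun hh => h (hπinj (by rw [hh, hj]))), if_neg h]
      rw [Finset.prod_congr rfl fun i _ => h1 i, Finset.prod_ite_eq']
      simp
    · left
      push_neg at hex
      rw [Finset.prod_congr rfl fun i _ => if_neg (hex i), Finset.prod_const_one]
  -- put it together
  have hBne : (∏ i, dε (y i)) ≠ 0 := Finset.prod_ne_zero_iff.mpr fun i _ => hdε_ne _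
  have Eq2' : ((∏ i, (c (y i) * dε (Sum.swap (y i)))) * (∏ i, d (π i))) •
        ω (fun i => (Pi.single (π i) (1:ℝ) : Fin n ⊕ Fin n → ℝ))
      = ((∏ i, dε (y i)) * (∏ i, d (f i))) •
        ω (fun i => (Pi.single (f i) (1:ℝ) : Fin n ⊕ Fin n → ℝ)) := by
    rw [← Finset.prod_mul_distrib, ← Finset.prod_mul_distrib]
    exact Eq2
  rw [hprod_dπ, hprod_df] at Eq2'
  simp only [smul_eq_mul] at Eq1 Eq2'
  exact arith_key (∏ i, (c (y i) * dε (Sum.swap (y i)))) (∏ i, dε (y i))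
    (ω fun i => (Pi.single (π i) (1:ℝ) : Fin n ⊕ Fin n → ℝ))
    (ω fun i => (Pi.single (f i) (1:ℝ) : Fin n ⊕ Fin n → ℝ))
    (∏ i, if π i = f i1 then (2⁻¹:ℝ) else 1) hBne hQval Eq1 Eq2'
end
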